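/- The category Cu_sc of scaled Cu-semigroups and scaled Cu-morphisms is bicomplete: every functor from a small category to Cu_sc has both a limit and a colimit. -/

import Mathlib

/-!
STATEMENT 9: The category Cu_sc of scaled Cu-semigroups and scaled Cu-morphisms is
bicomplete: every functor from a small category to Cu_sc has both a limit and a
colimit.
-/

universe u v w

/-- `x` is *way below* `y` (sequential compact containment `x ≪ y`). -/
def WayBelow {M : Type u} [Preorder M] (x y : M) : Prop :=
  ∀ s : ℕ → M, Monotone s → ∀ a : M, IsLUB (Set.range s) a → y ≤ a → ∃ n, x ≤ s n

theorem WayBelow.le {M : Type u} [Preorder M] {x y : M} (h : WayBelow x y) : x ≤ y := by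
  obtain ⟨n, hn⟩ := h (fun _ => y) monotone_const y (by simp [Set.range_const]) le_rfl
  exact hn

theorem WayBelow.mono {M : Type u} [Preorder M] {x' x y y' : M} (h : WayBelow x y)
    (hx : x' ≤ x) (hy : y ≤ y') : WayBelow x' y' := fun s hs a ha hya => by
  obtain ⟨n, hn⟩ := h s hs a ha (hy.trans hya)
  exact ⟨n, hx.trans hn⟩

theorem WayBelow.trans {M : Type u} [Preorder M] {x y z : M} (h : WayBelow x y)
    (h' : WayBelow y z) : WayBelow x z := h'.mono h.le le_rfl

/-- A map preserves suprema of increasing sequences. -/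
def PreservesSeqSup {M : Type u} {N : Type v} [Preorder M] [Preorder N] (f : M → N) : Prop :=
  ∀ s : ℕ → M, Monotone s → ∀ a : M, IsLUB (Set.range s) a →
    IsLUB (Set.range fun n => f (s n)) (f a)

/-- Axiom (O1): every increasing sequence has a supremum. -/
def SeqSupExists (M : Type u) [Preorder M] : Prop :=
  ∀ s : ℕ → M, Monotone s → ∃ a : M, IsLUB (Set.range s) a

/-- Axiom (O4): suprema of increasing sequences are additive. -/
def SeqSupAdditive (M : Type u) [AddCommMonoid M] [Preorder M] : Prop :=
  ∀ s t : ℕ → M, Monotone s → Monotone t → ∀ a b : M,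
    IsLUB (Set.range s) a → IsLUB (Set.range t) b →
    IsLUB (Set.range fun n => s n + t n) (a + b)

/-- The axioms of a positively ordered monoid: the partial order is translation
invariant and `0` is the least element. -/
structure PoMAxioms (M : Type u) [AddCommMonoid M] [PartialOrder M] : Prop where
  add_le_add_left : ∀ a b : M, a ≤ b → ∀ c : M, c + a ≤ c + b
  zero_le : ∀ a : M, 0 ≤ a

/-- A `PoM`-morphism: preserves addition, order and `0`. -/
structure IsPoMHom {M : Type u} {N : Type v} [AddCommMonoid M] [PartialOrder M]
    [AddCommMonoid N] [PartialOrder N] (f : M → N) : Prop where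
  map_zero : f 0 = 0
  map_add : ∀ x y : M, f (x + y) = f x + f y
  mono : Monotone f

/-- The axioms of an abstract Cuntz semigroup (`Cu`-semigroup). -/
structure CuAxioms (M : Type u) [AddCommMonoid M] [PartialOrder M] extends PoMAxioms M : Prop where
  O1 : SeqSupExists M
  O2 : ∀ x : M, ∃ s : ℕ → M, (∀ n, WayBelow (s n) (s (n + 1))) ∧ IsLUB (Set.range s) x
  O3 : ∀ x' x y' y : M, WayBelow x' x → WayBelow y' y → WayBelow (x' + y') (x + y)
  O4 : SeqSupAdditive M

/-- A `Cu`-morphism: preserves addition, order, `0`, way-below, and suprema of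
increasing sequences. -/
structure IsCuHom {M : Type u} {N : Type v} [AddCommMonoid M] [PartialOrder M]
    [AddCommMonoid N] [PartialOrder N] (f : M → N) extends IsPoMHom f : Prop where
  map_wayBelow : ∀ x y : M, WayBelow x y → WayBelow (f x) (f y)
  map_seqSup : PreservesSeqSup f

/-- An ideal of a `Cu`-semigroup: a downward hereditary submonoid that is closed
under suprema of increasing sequences. -/
structure IsCuIdeal {M : Type u} [AddCommMonoid M] [PartialOrder M] (I : Set M) : Prop where
  zero_mem : (0 : M) ∈ I
  add_mem : ∀ x y : M, x ∈ I → y ∈ I → x + y ∈ I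
  lower : ∀ x y : M, x ≤ y → y ∈ I → x ∈ I
  seqSup_mem : ∀ s : ℕ → M, Monotone s → (∀ n, s n ∈ I) → ∀ a : M, IsLUB (Set.range s) a → a ∈ I

/-- A scale on a Cu-semigroup: a downward hereditary subset, closed under suprema of
increasing sequences, generating the semigroup as an ideal. -/
structure IsScale {M : Type u} [AddCommMonoid M] [PartialOrder M] (A : Set M) : Prop where
  lower : ∀ x y : M, x ≤ y → y ∈ A → x ∈ A
  seqSup_mem : ∀ s : ℕ → M, Monotone s → (∀ n, s n ∈ A) → ∀ a : M, IsLUB (Set.range s) a → a ∈ A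
  generates : ∀ I : Set M, IsCuIdeal I → A ⊆ I → I = Set.univ

/-- The category of scaled Cu-semigroups and scaled Cu-morphisms. -/
structure CuscCat : Type (u + 1) where
  carrier : Type u
  [addCommMonoid : AddCommMonoid carrier]
  [partialOrder : PartialOrder carrier]
  cu : CuAxioms carrier
  scale : Set carrier
  isScale : IsScale scale

attribute [instance] CuscCat.addCommMonoid CuscCat.partialOrder

instance : CategoryTheory.Category CuscCat.{u} where
  Hom S T := { f : S.carrier → T.carrier // IsCuHom f ∧ ∀ x ∈ S.scale, f x ∈ T.scale }
  id S := ⟨id, ⟨⟨rfl, fun _ _ => rfl, fun _ _ h => h⟩, fun _ _ h => h, fun _ _ _ ha => ha⟩,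
    fun _ hx => hx⟩
  comp := fun {X Y Z} f g => ⟨g.1 ∘ f.1, by
    constructor
    · refine ⟨⟨?_, ?_, (g.2.1.mono.comp f.2.1.mono)⟩, ?_, ?_⟩
      · simp [Function.comp, f.2.1.map_zero, g.2.1.map_zero]
      · intro x y; simp [Function.comp, f.2.1.map_add, g.2.1.map_add]
      · exact fun x y h => g.2.1.map_wayBelow _ _ (f.2.1.map_wayBelow _ _ h)
      · exact fun s hs a ha => g.2.1.map_seqSup _ (f.2.1.mono.comp hs) _ (f.2.1.map_seqSup s hs a ha)
    · exact fun x hx => g.2.2 _ (f.2.2 x hx)⟩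

open CategoryTheory

/-! ### Chunk 1: general utilities -/

namespace CuP

open Set

section Basic

variable {M : Type v} [AddCommMonoid M] [PartialOrder M]

theorem isLUB_range_iff {N : Type w} [Preorder N] {s : ℕ → N} {a : N} :
    IsLUB (Set.range s) a ↔ (∀ n, s n ≤ a) ∧ ∀ b, (∀ n, s n ≤ b) → a ≤ b := by
  constructor
  · intro h
    exact ⟨fun n => h.1 ⟨n, rfl⟩, fun b hb => h.2 (by rintro x ⟨n, rfl⟩; exact hb n)⟩
  · intro h
    exact ⟨by rintro x ⟨n, rfl⟩; exact h.1 n, fun b hb => h.2 b (fun n => hb ⟨n, rfl⟩)⟩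

theorem isLUB_range_const {N : Type w} [Preorder N] (a : N) :
    IsLUB (Set.range fun _ : ℕ => a) a :=
  isLUB_range_iff.2 ⟨fun _ => le_rfl, fun _ hb => hb 0⟩

theorem PoMAxioms.add_le_add (pom : PoMAxioms M) {a b c d : M}
    (h₁ : a ≤ b) (h₂ : c ≤ d) : a + c ≤ b + d := by
  have t₁ : a + c ≤ a + d := pom.add_le_add_left _ _ h₂ a
  have t₂ : a + d ≤ b + d := by
    rw [add_comm a d, add_comm b d]; exact pom.add_le_add_left _ _ h₁ d
  exact t₁.trans t₂

theorem wayBelow_zero (pom : PoMAxioms M) (x : M) : WayBelow (0 : M) x := by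
  intro s _ a _ _
  exact ⟨0, pom.zero_le _⟩

variable (cu : CuAxioms M)

/-- Choice of supremum of a monotone sequence. -/
noncomputable def supT (s : ℕ → M) (hs : Monotone s) : M := (cu.O1 s hs).choose

theorem supT_isLUB (s : ℕ → M) (hs : Monotone s) : IsLUB (Set.range s) (supT cu s hs) :=
  (cu.O1 s hs).choose_spec

theorem le_supT (s : ℕ → M) (hs : Monotone s) (n : ℕ) : s n ≤ supT cu s hs :=
  (isLUB_range_iff.1 (supT_isLUB cu s hs)).1 n

theorem supT_le (s : ℕ → M) (hs : Monotone s) {b : M} (hb : ∀ n, s n ≤ b) :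
    supT cu s hs ≤ b :=
  (isLUB_range_iff.1 (supT_isLUB cu s hs)).2 b hb

theorem supT_eq_of_isLUB (s : ℕ → M) (hs : Monotone s) {a : M}
    (ha : IsLUB (Set.range s) a) : supT cu s hs = a :=
  (supT_isLUB cu s hs).unique ha

theorem supT_const (a : M) : supT cu (fun _ => a) monotone_const = a :=
  supT_eq_of_isLUB cu _ _ (isLUB_range_const a)

theorem supT_congr {s t : ℕ → M} (h : s = t) (hs : Monotone s) (ht : Monotone t) :
    supT cu s hs = supT cu t ht := by subst h; rfl

/-- Chosen rapid chain below an element. -/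
noncomputable def chainOf (x : M) : ℕ → M := (cu.O2 x).choose

theorem chain_wb (x : M) (n : ℕ) : WayBelow (chainOf cu x n) (chainOf cu x (n + 1)) :=
  (cu.O2 x).choose_spec.1 n

theorem chain_isLUB (x : M) : IsLUB (Set.range (chainOf cu x)) x :=
  (cu.O2 x).choose_spec.2

theorem chain_wb_lt (x : M) {n m : ℕ} (h : n < m) :
    WayBelow (chainOf cu x n) (chainOf cu x m) := by
  induction m with
  | zero => omega
  | succ m ih =>
    rcases Nat.lt_succ_iff_lt_or_eq.1 h with h' | h'
    · exact (ih h').trans (chain_wb cu x m)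
    · subst h'; exact chain_wb cu x n

theorem chain_mono (x : M) : Monotone (chainOf cu x) := by
  intro n m h
  rcases eq_or_lt_of_le h with rfl | h'
  · exact le_rfl
  · exact (chain_wb_lt cu x h').le

theorem chain_le (x : M) (n : ℕ) : chainOf cu x n ≤ x :=
  (isLUB_range_iff.1 (chain_isLUB cu x)).1 n

theorem chain_wb_top (x : M) (n : ℕ) : WayBelow (chainOf cu x n) x :=
  (chain_wb cu x n).mono le_rfl (chain_le cu x (n + 1))

include cu in
/-- Interpolation in a Cu-semigroup. -/
theorem interp {x y : M} (h : WayBelow x y) : ∃ z, WayBelow x z ∧ WayBelow z y := by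
  obtain ⟨n, hn⟩ := h (chainOf cu y) (chain_mono cu y) y (chain_isLUB cu y) le_rfl
  exact ⟨chainOf cu y (n + 1), (chain_wb cu y n).mono hn le_rfl, chain_wb_top cu y (n + 1)⟩

end Basic

/-! ### The dyadic tree order -/

/-- Index type for paths: nodes of the infinite binary tree. -/
abbrev D := List Bool

/-- The (dense linear) order on tree nodes: `w ++ [false] ++ s < w < w ++ [true] ++ t`. -/
inductive DLt : D → D → Prop
  | fn (s : D) : DLt (false :: s) []
  | nt (t : D) : DLt [] (true :: t)
  | ft (s t : D) : DLt (false :: s) (true :: t)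
  | cons (b : Bool) {s t : D} : DLt s t → DLt (b :: s) (b :: t)

theorem DLt.trans' : ∀ {a b c : D}, DLt a b → DLt b c → DLt a c := by
  intro a b c h₁ h₂
  induction h₁ generalizing c with
  | fn s =>
    cases h₂ with
    | nt t => exact DLt.ft s t
  | nt t =>
    cases h₂ with
    | cons b h => exact DLt.nt _
  | ft s t =>
    cases h₂ with
    | cons b h => exact DLt.ft _ _
  | cons b h ih =>
    cases h₂ with
    | fn s => exact DLt.fn _
    | ft s t => exact DLt.ft _ _
    | cons b h' => exact DLt.cons _ (ih h')

end CuP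
namespace CuP

open Set

/-- `replicate n true`, the cofinal anchor nodes. -/
abbrev ones (n : ℕ) : D := List.replicate n true

theorem dlt_append_left {w : D} : ∀ {s t : D}, DLt s t → DLt (w ++ s) (w ++ t) := by
  induction w with
  | nil => intro s t h; exact h
  | cons b w ih => intro s t h; exact DLt.cons b (ih h)

/-- `w ++ [false] ++ s < w`. -/
theorem dlt_left (w s : D) : DLt (w ++ false :: s) w := by
  induction w with
  | nil => exact DLt.fn s
  | cons b w ih => exact DLt.cons b ih

/-- `w < w ++ [true] ++ t`. -/
theorem dlt_right (w t : D) : DLt w (w ++ true :: t) := by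
  induction w with
  | nil => exact DLt.nt t
  | cons b w ih => exact DLt.cons b ih

/-- Everything of length `< M` is below the subtree at the anchor `1^M`. -/
theorem dlt_ones (w : D) {M : ℕ} (h : w.length < M) (z : D) : DLt w (ones M ++ z) := by
  induction w generalizing M with
  | nil =>
    cases M with
    | zero => omega
    | succ M => exact DLt.nt _
  | cons b w ih =>
    cases M with
    | zero => omega
    | succ M =>
      cases b with
      | false => exact DLt.ft _ _
      | true => exact DLt.cons true (ih (by simpa using h))
  
theorem dlt_ones_lt {n m : ℕ} (h : n < m) : DLt (ones n) (ones m) := by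
  have : (ones n).length < m := by simpa using h
  simpa using dlt_ones (ones n) this []

theorem dlt_ones_nil (w : D) {M : ℕ} (h : w.length < M) : DLt w (ones M) := by
  simpa using dlt_ones w h []

/-- `1^n ++ 0 ++ s < 1^m ++ 0 ++ t` whenever `n < m`. -/
theorem dlt_block {n m : ℕ} (h : n < m) (s t : D) :
    DLt (ones n ++ false :: s) (ones m ++ false :: t) := by
  have h1 : DLt (ones n ++ false :: s) (ones n) := dlt_left _ _
  have h2 : DLt (ones n) (ones m ++ false :: t) := by
    refine dlt_ones _ ?_ _
    simpa using h
  exact h1.trans' h2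

section Fill

variable {M : Type v} [AddCommMonoid M] [PartialOrder M] (cu : CuAxioms M)

/-- An interpolant for `x ≪ y`. -/
noncomputable def pickI {x y : M} (h : WayBelow x y) : M := (interp cu h).choose

theorem pickI_left {x y : M} (h : WayBelow x y) : WayBelow x (pickI cu h) :=
  (interp cu h).choose_spec.1

theorem pickI_right {x y : M} (h : WayBelow x y) : WayBelow (pickI cu h) y :=
  (interp cu h).choose_spec.2

/-- The dyadic filling of the interval `(a,b)` for `a ≪ b`. -/
noncomputable def fill : {a b : M} → WayBelow a b → D → M
  | _, _, h, [] => pickI cu h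
  | _, _, h, (true :: r) => fill (pickI_right cu h) r
  | _, _, h, (false :: r) => fill (pickI_left cu h) r

theorem fill_gt : ∀ {a b : M} (h : WayBelow a b) (w : D), WayBelow a (fill cu h w)
  | _, _, h, [] => pickI_left cu h
  | _, _, h, (true :: r) => (pickI_left cu h).trans (fill_gt (pickI_right cu h) r)
  | _, _, h, (false :: r) => fill_gt (pickI_left cu h) r

theorem fill_lt : ∀ {a b : M} (h : WayBelow a b) (w : D), WayBelow (fill cu h w) b
  | _, _, h, [] => pickI_right cu h
  | _, _, h, (true :: r) => fill_lt (pickI_right cu h) r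
  | _, _, h, (false :: r) => (fill_lt (pickI_left cu h) r).trans (pickI_right cu h)

theorem fill_mono {w w' : D} (hw : DLt w w') :
    ∀ {a b : M} (h : WayBelow a b), WayBelow (fill cu h w) (fill cu h w') := by
  induction hw with
  | fn s => intro a b h; exact fill_lt cu (pickI_left cu h) s
  | nt t => intro a b h; exact fill_gt cu (pickI_right cu h) t
  | ft s t =>
    intro a b h
    exact (fill_lt cu (pickI_left cu h) s).trans (fill_gt cu (pickI_right cu h) t)
  | cons b hst ih =>
    intro a b' h
    cases b with
    | true => exact ih (pickI_right cu h)
    | false => exact ih (pickI_left cu h)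

/-- The canonical ≪-path below an element `x`, glued from the chain of `x`
    and dyadic fillings. -/
noncomputable def upgo (x : M) : ℕ → D → M
  | k, [] => chainOf cu x (2 * k + 1)
  | k, (true :: r) => upgo x (k + 1) r
  | k, (false :: r) => fill cu (chain_wb cu x (2 * k)) r

theorem upgo_lb (x : M) : ∀ (w : D) (k : ℕ), WayBelow (chainOf cu x (2 * k)) (upgo cu x k w)
  | [], k => chain_wb cu x (2 * k)
  | (true :: r), k => by
    have h1 : WayBelow (chainOf cu x (2 * k)) (chainOf cu x (2 * (k + 1))) :=
      chain_wb_lt cu x (by omega)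
    exact h1.trans (upgo_lb x r (k + 1))
  | (false :: r), k => fill_gt cu (chain_wb cu x (2 * k)) r

theorem upgo_ub (x : M) :
    ∀ (w : D) (k : ℕ), ∃ m, WayBelow (upgo cu x k w) (chainOf cu x m)
  | [], k => ⟨2 * k + 2, chain_wb cu x (2 * k + 1)⟩
  | (true :: r), k => upgo_ub x r (k + 1)
  | (false :: r), k => ⟨2 * k + 1, fill_lt cu (chain_wb cu x (2 * k)) r⟩

theorem upgo_mono (x : M) {w w' : D} (hw : DLt w w') :
    ∀ k, WayBelow (upgo cu x k w) (upgo cu x k w') := by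
  induction hw with
  | fn s => intro k; exact fill_lt cu (chain_wb cu x (2 * k)) s
  | nt t =>
    intro k
    have h1 : WayBelow (chainOf cu x (2 * k + 1)) (chainOf cu x (2 * (k + 1))) :=
      chain_wb_lt cu x (by omega)
    exact h1.trans (upgo_lb cu x t (k + 1))
  | ft s t =>
    intro k
    have h1 : WayBelow (fill cu (chain_wb cu x (2 * k)) s) (chainOf cu x (2 * k + 1)) :=
      fill_lt cu _ s
    have h2 : WayBelow (chainOf cu x (2 * k + 1)) (chainOf cu x (2 * (k + 1))) :=
      chain_wb_lt cu x (by omega)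
    exact (h1.trans h2).trans (upgo_lb cu x t (k + 1))
  | cons b hst ih =>
    intro k
    cases b with
    | true => exact ih (k + 1)
    | false => exact fill_mono cu hst _

/-- The path below `x`. -/
noncomputable def upath (x : M) : D → M := upgo cu x 0

theorem upath_mono (x : M) {w w' : D} (hw : DLt w w') :
    WayBelow (upath cu x w) (upath cu x w') := upgo_mono cu x hw 0

theorem upath_anchor (x : M) : ∀ n, upath cu x (ones n) = chainOf cu x (2 * n + 1) := by
  have key : ∀ n k, upgo cu x k (ones n) = chainOf cu x (2 * (k + n) + 1) := by
    intro n
    induction n with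
    | zero => intro k; simp [ones, upgo]
    | succ n ih =>
      intro k
      show upgo cu x (k+1) (ones n) = _
      rw [ih (k+1)]
      congr 1
      omega
  intro n
  simpa [upath] using key n 0

theorem upath_le (x : M) (w : D) : upath cu x w ≤ x := by
  obtain ⟨m, hm⟩ := upgo_ub cu x w 0
  exact hm.le.trans (chain_le cu x m)

theorem upath_wb (x : M) (w : D) : WayBelow (upath cu x w) x := by
  obtain ⟨m, hm⟩ := upgo_ub cu x w 0
  exact hm.mono le_rfl (chain_le cu x m)

theorem upath_isLUB (x : M) : IsLUB (Set.range fun n => upath cu x (ones n)) x := by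
  rw [isLUB_range_iff]
  constructor
  · intro n; exact upath_le cu x (ones n)
  · intro b hb
    refine (isLUB_range_iff.1 (chain_isLUB cu x)).2 b ?_
    intro m
    have h1 : chainOf cu x m ≤ chainOf cu x (2 * m + 1) := chain_mono cu x (by omega)
    have := hb m
    rw [upath_anchor cu x m] at this
    exact h1.trans this

theorem upath_anchor_mono (x : M) : Monotone (fun n => upath cu x (ones n)) := by
  intro n m h
  rcases eq_or_lt_of_le h with rfl | h'
  · exact le_rfl
  · exact (upath_mono cu x (dlt_ones_lt h')).le

theorem chain_le_chain {x y : M} (h : x ≤ y) (n : ℕ) :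
    ∃ m, chainOf cu x n ≤ chainOf cu y m :=
  ((chain_wb_top cu x n).mono le_rfl h) (chainOf cu y) (chain_mono cu y) y
    (chain_isLUB cu y) le_rfl

end Fill

end CuP
namespace CuP

open Set

/-! ### Chunk 2: the sequence completion of a W-structure -/

/-- A W-structure: a commutative monoid with an auxiliary transitive relation
satisfying the axioms needed for the Cu-completion. -/
structure WS (P : Type v) [AddCommMonoid P] : Type v where
  rel : P → P → Prop
  trans : ∀ {a b c}, rel a b → rel b c → rel a c
  zero : ∀ x, rel 0 x
  addc : ∀ {a b c d}, rel a b → rel c d → rel (a + c) (b + d)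
  interp : ∀ {a b}, rel a b → ∃ z, rel a z ∧ rel z b

variable {P : Type v} [AddCommMonoid P] (R : WS P)

/-- `rel`-increasing sequences. -/
def CSeq := {σ : ℕ → P // ∀ n, R.rel (σ n) (σ (n + 1))}

theorem CSeq.chain_lt (σ : CSeq R) {n m : ℕ} (h : n < m) : R.rel (σ.1 n) (σ.1 m) := by
  induction m with
  | zero => omega
  | succ m ih =>
    rcases Nat.lt_succ_iff_lt_or_eq.1 h with h' | h'
    · exact R.trans (ih h') (σ.2 m)
    · subst h'; exact σ.2 n

theorem CSeq.rel_up (σ : CSeq R) {a : P} {m m' : ℕ} (h : R.rel a (σ.1 m)) (hm : m ≤ m') :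
    R.rel a (σ.1 m') := by
  rcases eq_or_lt_of_le hm with rfl | h'
  · exact h
  · exact R.trans h (CSeq.chain_lt R σ h')

/-- The preorder on sequences. -/
def cle (σ τ : CSeq R) : Prop := ∀ n, ∃ m, R.rel (σ.1 n) (τ.1 m)

theorem cle_refl (σ : CSeq R) : cle R σ σ := fun n => ⟨n + 1, σ.2 n⟩

theorem cle_trans {σ τ ρ : CSeq R} (h₁ : cle R σ τ) (h₂ : cle R τ ρ) : cle R σ ρ := by
  intro n
  obtain ⟨m, hm⟩ := h₁ n
  obtain ⟨k, hk⟩ := h₂ m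
  exact ⟨k, R.trans hm hk⟩

/-- The canonical setoid. -/
def cev : Setoid (CSeq R) :=
  ⟨fun σ τ => cle R σ τ ∧ cle R τ σ,
   fun σ => ⟨cle_refl R σ, cle_refl R σ⟩,
   fun h => ⟨h.2, h.1⟩,
   fun h₁ h₂ => ⟨cle_trans R h₁.1 h₂.1, cle_trans R h₂.2 h₁.2⟩⟩

/-- The Cu-completion of a W-structure. -/
def Cpl := Quotient (cev R)

/-- Canonical quotient map. -/
def mkc (σ : CSeq R) : Cpl R := Quotient.mk (cev R) σ

theorem mkc_out (x : Cpl R) : mkc R (Quotient.out x) = x := Quotient.out_eq x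

/-- Sum of sequences. -/
def cadd (σ τ : CSeq R) : CSeq R :=
  ⟨fun n => σ.1 n + τ.1 n, fun n => R.addc (σ.2 n) (τ.2 n)⟩

/-- Zero sequence. -/
def czero : CSeq R := ⟨fun _ => 0, fun _ => R.zero 0⟩

theorem cle_add {σ σ' τ τ' : CSeq R} (h₁ : cle R σ σ') (h₂ : cle R τ τ') :
    cle R (cadd R σ τ) (cadd R σ' τ') := by
  intro n
  obtain ⟨m₁, hm₁⟩ := h₁ n
  obtain ⟨m₂, hm₂⟩ := h₂ n
  refine ⟨max m₁ m₂, R.addc ?_ ?_⟩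
  · exact CSeq.rel_up R σ' hm₁ (le_max_left _ _)
  · exact CSeq.rel_up R τ' hm₂ (le_max_right _ _)

instance : PartialOrder (Cpl R) where
  le := Quotient.lift₂ (fun σ τ => cle R σ τ) (by
    intro a b a' b' ha hb
    apply propext
    constructor
    · intro h; exact cle_trans R ha.2 (cle_trans R h hb.1)
    · intro h; exact cle_trans R ha.1 (cle_trans R h hb.2))
  le_refl := by
    intro x
    obtain ⟨σ, rfl⟩ := Quotient.exists_rep x
    exact cle_refl R σ
  le_trans := by
    intro x y z
    obtain ⟨σ, rfl⟩ := Quotient.exists_rep x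
    obtain ⟨τ, rfl⟩ := Quotient.exists_rep y
    obtain ⟨ρ, rfl⟩ := Quotient.exists_rep z
    exact fun hx hy => cle_trans R hx hy
  le_antisymm := by
    intro x y
    obtain ⟨σ, rfl⟩ := Quotient.exists_rep x
    obtain ⟨τ, rfl⟩ := Quotient.exists_rep y
    exact fun hx hy => Quotient.sound ⟨hx, hy⟩

theorem mkc_le_mkc {σ τ : CSeq R} : mkc R σ ≤ mkc R τ ↔ cle R σ τ := Iff.rfl

instance : Add (Cpl R) :=
  ⟨Quotient.lift₂ (fun σ τ => mkc R (cadd R σ τ)) (by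
    intro a b a' b' ha hb
    exact Quotient.sound ⟨cle_add R ha.1 hb.1, cle_add R ha.2 hb.2⟩)⟩

instance : Zero (Cpl R) := ⟨mkc R (czero R)⟩

instance : AddCommMonoid (Cpl R) where
  nsmul := nsmulRec
  add := (· + ·)
  zero := 0
  add_assoc := by
    intro x y z
    obtain ⟨σ, rfl⟩ := Quotient.exists_rep x
    obtain ⟨τ, rfl⟩ := Quotient.exists_rep y
    obtain ⟨ρ, rfl⟩ := Quotient.exists_rep z
    apply congrArg (mkc R)
    apply Subtype.ext
    funext n
    exact add_assoc _ _ _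
  zero_add := by
    intro x
    obtain ⟨σ, rfl⟩ := Quotient.exists_rep x
    apply congrArg (mkc R)
    apply Subtype.ext
    funext n
    exact zero_add _
  add_zero := by
    intro x
    obtain ⟨σ, rfl⟩ := Quotient.exists_rep x
    apply congrArg (mkc R)
    apply Subtype.ext
    funext n
    exact add_zero _
  add_comm := by
    intro x y
    obtain ⟨σ, rfl⟩ := Quotient.exists_rep x
    obtain ⟨τ, rfl⟩ := Quotient.exists_rep y
    apply congrArg (mkc R)
    apply Subtype.ext
    funext n
    exact add_comm _ _

theorem mkc_add (σ τ : CSeq R) : mkc R σ + mkc R τ = mkc R (cadd R σ τ) := rfl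

theorem mkc_zero : (0 : Cpl R) = mkc R (czero R) := rfl

theorem cpl_zero_le (x : Cpl R) : (0 : Cpl R) ≤ x := by
  obtain ⟨σ, rfl⟩ := Quotient.exists_rep x
  exact fun n => ⟨0, R.zero _⟩

theorem cpl_add_le_add_left : ∀ a b : Cpl R, a ≤ b → ∀ c : Cpl R, c + a ≤ c + b := by
  intro a b hab c
  obtain ⟨σ, rfl⟩ := Quotient.exists_rep a
  obtain ⟨τ, rfl⟩ := Quotient.exists_rep b
  obtain ⟨γ, rfl⟩ := Quotient.exists_rep c
  exact cle_add R (cle_refl R γ) hab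

theorem cpl_add_le_add {a b c d : Cpl R} (h₁ : a ≤ b) (h₂ : c ≤ d) : a + c ≤ b + d := by
  have t₁ : a + c ≤ a + d := cpl_add_le_add_left R _ _ h₂ a
  have t₂ : a + d ≤ b + d := by
    rw [add_comm a d, add_comm b d]; exact cpl_add_le_add_left R _ _ h₁ d
  exact t₁.trans t₂

/-! #### Suprema via diagonalization -/

theorem rel_bound_list {τ : CSeq R} :
    ∀ L : List P, (∀ p ∈ L, ∃ m, R.rel p (τ.1 m)) → ∃ m, ∀ p ∈ L, R.rel p (τ.1 m) := by
  intro L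
  induction L with
  | nil => intro _; exact ⟨0, by simp⟩
  | cons q L ih =>
    intro h
    obtain ⟨m₁, hm₁⟩ := ih (fun p hp => h p (List.mem_cons_of_mem _ hp))
    obtain ⟨m₂, hm₂⟩ := h q (List.mem_cons_self)
    refine ⟨max m₁ m₂, ?_⟩
    intro p hp
    rcases List.mem_cons.1 hp with rfl | hp'
    · exact CSeq.rel_up R τ hm₂ (le_max_right _ _)
    · exact CSeq.rel_up R τ (hm₁ p hp') (le_max_left _ _)

section Sup

variable (x : ℕ → Cpl R) (hx : Monotone x)

/-- Representatives. -/
noncomputable def srep (k : ℕ) : CSeq R := Quotient.out (x k)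

theorem srep_cle (hx : Monotone x) {i k : ℕ} (h : i ≤ k) : cle R (srep R x i) (srep R x k) := by
  have : x i ≤ x k := hx h
  rw [← mkc_out R (x i), ← mkc_out R (x k)] at this
  exact this

/-- Key existence for the diagonal. -/
theorem dstep_ex (hx : Monotone x) (n : ℕ) (prev : ℕ) :
    ∃ m, (∀ i j, i ≤ n + 1 → j ≤ n + 1 → R.rel ((srep R x i).1 j) ((srep R x (n+1)).1 m)) ∧
      R.rel ((srep R x n).1 prev) ((srep R x (n+1)).1 m) := by
  classical
  set L : List P :=
    ((srep R x n).1 prev) :: ((List.range (n + 2)).flatMap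
      (fun i => (List.range (n + 2)).map (fun j => (srep R x i).1 j))) with hL
  have hmem : ∀ p ∈ L, ∃ m, R.rel p ((srep R x (n+1)).1 m) := by
    intro p hp
    rcases List.mem_cons.1 hp with rfl | hp'
    · exact srep_cle R x hx (Nat.le_succ n) prev
    · obtain ⟨i, hi, hp''⟩ := List.mem_flatMap.1 hp'
      obtain ⟨j, hj, rfl⟩ := List.mem_map.1 hp''
      exact srep_cle R x hx (Nat.lt_succ_iff.1 (List.mem_range.1 hi)) j
  obtain ⟨m, hm⟩ := rel_bound_list R L hmem
  refine ⟨m, ?_, ?_⟩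
  · intro i j hi hj
    refine hm _ ?_
    refine List.mem_cons_of_mem _ ?_
    refine List.mem_flatMap.2 ⟨i, ?_, List.mem_map.2 ⟨j, ?_, rfl⟩⟩
    · exact List.mem_range.2 (by omega)
    · exact List.mem_range.2 (by omega)
  · exact hm _ (List.mem_cons_self)

theorem dzero_ex : ∃ m, ∀ i j, i ≤ 0 → j ≤ 0 → R.rel ((srep R x i).1 j) ((srep R x 0).1 m) := by
  refine ⟨1, ?_⟩
  intro i j hi hj
  have : i = 0 := by omega
  subst this
  have : j = 0 := by omega
  subst this
  exact (srep R x 0).2 0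

/-- The diagonal index function. -/
noncomputable def dK : ℕ → ℕ
  | 0 => Classical.choose (dzero_ex R x)
  | (n+1) => Classical.choose (dstep_ex R x hx n (dK n))

theorem dK_spec : ∀ n, ∀ i j, i ≤ n → j ≤ n →
    R.rel ((srep R x i).1 j) ((srep R x n).1 (dK R x hx n)) := by
  intro n
  cases n with
  | zero => exact Classical.choose_spec (dzero_ex R x)
  | succ n => exact (Classical.choose_spec (dstep_ex R x hx n (dK R x hx n))).1

theorem dK_step (n : ℕ) :
    R.rel ((srep R x n).1 (dK R x hx n)) ((srep R x (n+1)).1 (dK R x hx (n+1))) :=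
  (Classical.choose_spec (dstep_ex R x hx n (dK R x hx n))).2

/-- The diagonal sequence. -/
noncomputable def diag : CSeq R :=
  ⟨fun n => (srep R x n).1 (dK R x hx n), fun n => dK_step R x hx n⟩

theorem csup_isLUB : IsLUB (Set.range x) (mkc R (diag R x hx)) := by
  rw [isLUB_range_iff]
  constructor
  · intro k
    rw [← mkc_out R (x k)]
    intro j
    refine ⟨max k j, ?_⟩
    exact dK_spec R x hx (max k j) k j (le_max_left _ _) (le_max_right _ _)
  · intro b hb
    rw [← mkc_out R b]
    intro n
    have h1 : R.rel ((srep R x n).1 (dK R x hx n)) ((srep R x n).1 (dK R x hx n + 1)) :=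
      (srep R x n).2 _
    have h2 : x n ≤ b := hb n
    rw [← mkc_out R (x n), ← mkc_out R b] at h2
    obtain ⟨m, hm⟩ := h2 (dK R x hx n + 1)
    exact ⟨m, R.trans h1 hm⟩

end Sup

/-! #### Way-below characterization -/

theorem wb_le_single {ρ τ : CSeq R} (m : ℕ) (h : ∀ k, R.rel (ρ.1 k) (τ.1 m))
    {x : ℕ → Cpl R} (hx : Monotone x) {a : Cpl R} (ha : IsLUB (Set.range x) a)
    (hτa : mkc R τ ≤ a) : ∃ N, mkc R ρ ≤ x N := by
  have := ha.unique (csup_isLUB R x hx)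
  subst this
  obtain ⟨n₀, hn₀⟩ := hτa m
  refine ⟨n₀, ?_⟩
  rw [← mkc_out R (x n₀)]
  intro k
  exact ⟨dK R x hx n₀, R.trans (h k) hn₀⟩

theorem wb_intro {σ τ : CSeq R} (m : ℕ) (h : ∀ k, R.rel (σ.1 k) (τ.1 m)) :
    WayBelow (mkc R σ) (mkc R τ) := by
  intro s hs a ha hle
  exact wb_le_single R m h hs ha hle

/-! #### Approximants -/

section Apx

variable (τ : CSeq R)

noncomputable def apxAux (n : ℕ) : ℕ → {p : P // R.rel p (τ.1 (n + 1))}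
  | 0 => ⟨τ.1 n, τ.2 n⟩
  | (k+1) => ⟨Classical.choose (R.interp (apxAux n k).2),
      (Classical.choose_spec (R.interp (apxAux n k).2)).2⟩

theorem apxAux_step (n k : ℕ) : R.rel (apxAux R τ n k).1 (apxAux R τ n (k+1)).1 :=
  (Classical.choose_spec (R.interp (apxAux R τ n k).2)).1

/-- The `n`-th approximant sequence of `τ`. -/
noncomputable def apx (n : ℕ) : CSeq R :=
  ⟨fun k => (apxAux R τ n k).1, fun k => apxAux_step R τ n k⟩

theorem apx_rel (n k : ℕ) : R.rel ((apx R τ n).1 k) (τ.1 (n + 1)) := (apxAux R τ n k).2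

theorem apx_zero (n : ℕ) : (apx R τ n).1 0 = τ.1 n := rfl

theorem apx_le (n : ℕ) : mkc R (apx R τ n) ≤ mkc R τ :=
  fun k => ⟨n + 1, apx_rel R τ n k⟩

theorem apx_wb (n : ℕ) : WayBelow (mkc R (apx R τ n)) (mkc R (apx R τ (n + 1))) := by
  refine wb_intro R 1 ?_
  intro k
  have h1 : R.rel ((apx R τ n).1 k) ((apx R τ (n+1)).1 0) := apx_rel R τ n k
  exact R.trans h1 (apxAux_step R τ (n+1) 0)

theorem apx_mono : Monotone (fun n => mkc R (apx R τ n)) :=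
  monotone_nat_of_le_succ (fun n => (apx_wb R τ n).le)

theorem apx_isLUB : IsLUB (Set.range fun n => mkc R (apx R τ n)) (mkc R τ) := by
  rw [isLUB_range_iff]
  constructor
  · exact fun n => apx_le R τ n
  · intro b hb
    obtain ⟨β, rfl⟩ := Quotient.exists_rep b
    intro n
    obtain ⟨m, hm⟩ := hb n 0
    rw [apx_zero R τ n] at hm
    exact ⟨m, hm⟩

end Apx

theorem wb_elim {σ τ : CSeq R} (h : WayBelow (mkc R σ) (mkc R τ)) :
    ∃ m, ∀ k, R.rel (σ.1 k) (τ.1 m) := by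
  obtain ⟨n, hn⟩ := h (fun n => mkc R (apx R τ n)) (apx_mono R τ) (mkc R τ)
    (apx_isLUB R τ) le_rfl
  refine ⟨n + 1, ?_⟩
  intro k
  obtain ⟨j, hj⟩ := hn k
  exact R.trans hj (apx_rel R τ n j)

/-! #### The Cu axioms for the completion -/

theorem cplPoM : PoMAxioms (Cpl R) where
  add_le_add_left := cpl_add_le_add_left R
  zero_le := cpl_zero_le R

theorem cplCu : CuAxioms (Cpl R) where
  add_le_add_left := cpl_add_le_add_left R
  zero_le := cpl_zero_le R
  O1 := fun s hs => ⟨mkc R (diag R s hs), csup_isLUB R s hs⟩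
  O2 := by
    intro x
    refine ⟨fun n => mkc R (apx R (Quotient.out x) n), fun n => apx_wb R _ n, ?_⟩
    have := apx_isLUB R (Quotient.out x)
    rwa [mkc_out R x] at this
  O3 := by
    intro x' x y' y h₁ h₂
    rw [← mkc_out R x', ← mkc_out R x] at h₁ ⊢
    rw [← mkc_out R y', ← mkc_out R y] at h₂ ⊢
    obtain ⟨m₁, hm₁⟩ := wb_elim R h₁
    obtain ⟨m₂, hm₂⟩ := wb_elim R h₂
    rw [mkc_add, mkc_add]
    refine wb_intro R (max m₁ m₂) ?_
    intro k
    refine R.addc ?_ ?_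
    · exact CSeq.rel_up R _ (hm₁ k) (le_max_left _ _)
    · exact CSeq.rel_up R _ (hm₂ k) (le_max_right _ _)
  O4 := by
    intro s t hs ht a b ha hb
    have ha' := ha.unique (csup_isLUB R s hs)
    have hb' := hb.unique (csup_isLUB R t ht)
    subst ha'; subst hb'
    rw [mkc_add]
    rw [isLUB_range_iff]
    constructor
    · intro n
      exact cpl_add_le_add R (ha.1 ⟨n, rfl⟩) (hb.1 ⟨n, rfl⟩)
    · intro c hc
      rw [← mkc_out R c]
      intro n
      -- diag terms
      have h2 : s n + t n ≤ c := hc n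
      rw [← mkc_out R (s n), ← mkc_out R (t n), mkc_add, ← mkc_out R c] at h2
      set j : ℕ := max (dK R s hs n) (dK R t ht n) + 1 with hj
      obtain ⟨m, hm⟩ := h2 j
      refine ⟨m, R.trans ?_ hm⟩
      refine R.addc ?_ ?_
      · exact CSeq.chain_lt R (srep R s n) (by omega)
      · exact CSeq.chain_lt R (srep R t n) (by omega)

/-! #### Extension of W-maps to Cu-morphisms -/

section Ext

variable {T : Type w} [AddCommMonoid T] [PartialOrder T] (cuT : CuAxioms T)
variable (f : P → T)

theorem ext_mono_seq (hfr : ∀ {a b}, R.rel a b → WayBelow (f a) (f b)) (σ : CSeq R) :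
    Monotone (fun n => f (σ.1 n)) :=
  monotone_nat_of_le_succ (fun n => (hfr (σ.2 n)).le)

variable (hf0 : f 0 = 0) (hfadd : ∀ a b, f (a + b) = f a + f b)
  (hfr : ∀ {a b}, R.rel a b → WayBelow (f a) (f b))

/-- The extension of a W-map to the completion. -/
noncomputable def ext : Cpl R → T :=
  Quotient.lift (fun σ => supT cuT (fun n => f (σ.1 n)) (ext_mono_seq R f hfr σ)) (by
    intro σ τ hστ
    apply le_antisymm
    · refine supT_le cuT _ _ ?_
      intro n
      obtain ⟨m, hm⟩ := hστ.1 n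
      exact ((hfr hm).le).trans (le_supT cuT (fun n => f (τ.1 n)) (ext_mono_seq R f hfr τ) m)
    · refine supT_le cuT _ _ ?_
      intro n
      obtain ⟨m, hm⟩ := hστ.2 n
      exact ((hfr hm).le).trans (le_supT cuT (fun n => f (σ.1 n)) (ext_mono_seq R f hfr σ) m))

theorem ext_mk (σ : CSeq R) :
    ext R cuT f hfr (mkc R σ) = supT cuT (fun n => f (σ.1 n)) (ext_mono_seq R f hfr σ) := rfl

theorem ext_mono : Monotone (ext R cuT f hfr) := by
  intro x y hxy
  obtain ⟨σ, rfl⟩ := Quotient.exists_rep x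
  obtain ⟨τ, rfl⟩ := Quotient.exists_rep y
  rw [show Quotient.mk (cev R) σ = mkc R σ from rfl,
     show Quotient.mk (cev R) τ = mkc R τ from rfl] at *
  rw [ext_mk, ext_mk]
  refine supT_le cuT _ _ ?_
  intro n
  obtain ⟨m, hm⟩ := hxy n
  exact ((hfr hm).le).trans (le_supT cuT (fun n => f (τ.1 n)) (ext_mono_seq R f hfr τ) m)

include hf0 in
theorem ext_zero : ext R cuT f hfr 0 = 0 := by
  rw [mkc_zero, ext_mk]
  have : (fun n => f ((czero R).1 n)) = fun _ => (0 : T) := by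
    funext n; exact hf0
  rw [show supT cuT (fun n => f ((czero R).1 n)) (ext_mono_seq R f hfr (czero R))
      = supT cuT (fun _ => (0:T)) monotone_const from by congr 1]
  exact supT_const cuT 0

include hfadd in
theorem ext_add (x y : Cpl R) :
    ext R cuT f hfr (x + y) = ext R cuT f hfr x + ext R cuT f hfr y := by
  obtain ⟨σ, rfl⟩ := Quotient.exists_rep x
  obtain ⟨τ, rfl⟩ := Quotient.exists_rep y
  rw [show (Quotient.mk (cev R) σ : Cpl R) = mkc R σ from rfl,
     show (Quotient.mk (cev R) τ : Cpl R) = mkc R τ from rfl]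
  rw [mkc_add, ext_mk, ext_mk, ext_mk]
  have hlub := cuT.O4 _ _ (ext_mono_seq R f hfr σ) (ext_mono_seq R f hfr τ) _ _
    (supT_isLUB cuT _ (ext_mono_seq R f hfr σ)) (supT_isLUB cuT _ (ext_mono_seq R f hfr τ))
  refine supT_eq_of_isLUB cuT _ _ ?_
  have : (fun n => f ((cadd R σ τ).1 n)) = fun n => f (σ.1 n) + f (τ.1 n) := by
    funext n; exact hfadd _ _
  rw [this]
  exact hlub

theorem ext_wayBelow {x y : Cpl R} (h : WayBelow x y) :
    WayBelow (ext R cuT f hfr x) (ext R cuT f hfr y) := by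
  obtain ⟨σ, rfl⟩ := Quotient.exists_rep x
  obtain ⟨τ, rfl⟩ := Quotient.exists_rep y
  obtain ⟨m, hm⟩ := wb_elim R (σ := σ) (τ := τ) h
  have h1 : ext R cuT f hfr (mkc R σ) ≤ f (τ.1 m) := by
    rw [ext_mk]
    exact supT_le cuT _ _ (fun k => (hfr (hm k)).le)
  have h2 : WayBelow (f (τ.1 m)) (f (τ.1 (m+1))) := hfr (τ.2 m)
  have h3 : f (τ.1 (m+1)) ≤ ext R cuT f hfr (mkc R τ) := by
    rw [ext_mk]
    exact le_supT cuT (fun n => f (τ.1 n)) (ext_mono_seq R f hfr τ) (m+1)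
  exact h2.mono h1 h3

theorem ext_seqSup : PreservesSeqSup (ext R cuT f hfr) := by
  intro s hs a ha
  have ha' := ha.unique (csup_isLUB R s hs)
  subst ha'
  rw [isLUB_range_iff]
  constructor
  · intro n
    exact ext_mono R cuT f hfr (ha.1 ⟨n, rfl⟩)
  · intro c hc
    rw [ext_mk]
    refine supT_le cuT _ _ ?_
    intro n
    have h1 : f ((diag R s hs).1 n) ≤ ext R cuT f hfr (s n) := by
      rw [← mkc_out R (s n), ext_mk]
      exact le_supT cuT (fun k => f ((Quotient.out (s n)).1 k))
        (ext_mono_seq R f hfr (Quotient.out (s n))) (dK R s hs n)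
    exact h1.trans (hc n)

include hf0 hfadd in
theorem ext_isCuHom : IsCuHom (ext R cuT f hfr) := by
  refine ⟨⟨ext_zero R cuT f hf0 hfr, ?_, ext_mono R cuT f hfr⟩,
    fun x y h => ext_wayBelow R cuT f hfr h, ext_seqSup R cuT f hfr⟩
  intro x y
  exact ext_add R cuT f hfadd hfr x y

end Ext

end CuP
namespace CuP

open Set CategoryTheory

set_option linter.unusedSectionVars false

section Limit

variable {I : Type u} [SmallCategory I] (F : I ⥤ CuscCat.{u})

/-- Compatible families (sections) of the diagram. -/
def Sec : Type u :=
  {x : ∀ i, (F.obj i).carrier // ∀ {i j : I} (f : i ⟶ j), (F.map f).1 (x i) = x j}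

instance : Add (Sec F) :=
  ⟨fun x y => ⟨fun i => x.1 i + y.1 i, by
    intro i j f
    rw [(F.map f).2.1.map_add, x.2 f, y.2 f]⟩⟩

instance : Zero (Sec F) :=
  ⟨⟨fun _ => 0, by intro i j f; rw [(F.map f).2.1.map_zero]⟩⟩

instance : AddCommMonoid (Sec F) where
  nsmul := nsmulRec
  add := (· + ·)
  zero := 0
  add_assoc := by intro a b c; apply Subtype.ext; funext i; exact add_assoc _ _ _
  zero_add := by intro a; apply Subtype.ext; funext i; exact zero_add _
  add_zero := by intro a; apply Subtype.ext; funext i; exact add_zero _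
  add_comm := by intro a b; apply Subtype.ext; funext i; exact add_comm _ _

@[simp] theorem sec_add_apply (x y : Sec F) (i : I) : (x + y).1 i = x.1 i + y.1 i := rfl

@[simp] theorem sec_zero_apply (i : I) : (0 : Sec F).1 i = 0 := rfl

/-- Pointwise way-below of sections. -/
def precS (x y : Sec F) : Prop := ∀ i, WayBelow (x.1 i) (y.1 i)

theorem precS_trans {x y z : Sec F} (h₁ : precS F x y) (h₂ : precS F y z) : precS F x z :=
  fun i => (h₁ i).trans (h₂ i)

theorem precS_zero (x : Sec F) : precS F 0 x :=
  fun i => wayBelow_zero (F.obj i).cu.toPoMAxioms _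

theorem precS_add {x y x' y' : Sec F} (h₁ : precS F x y) (h₂ : precS F x' y') :
    precS F (x + x') (y + y') :=
  fun i => (F.obj i).cu.O3 _ _ _ _ (h₁ i) (h₂ i)

theorem precS_le_right {x y z : Sec F} (h : precS F x y) (h' : ∀ i, y.1 i ≤ z.1 i) :
    precS F x z := fun i => (h i).mono le_rfl (h' i)

theorem precS_le_left {x y z : Sec F} (h : ∀ i, x.1 i ≤ y.1 i) (h' : precS F y z) :
    precS F x z := fun i => (h' i).mono (h i) le_rfl

/-- Strictly increasing paths of sections. -/
def PathS : Type u :=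
  {p : D → Sec F // ∀ {w w' : D}, DLt w w' → precS F (p w) (p w')}

instance : Add (PathS F) :=
  ⟨fun p q => ⟨fun w => p.1 w + q.1 w, fun h => precS_add F (p.2 h) (q.2 h)⟩⟩

instance : Zero (PathS F) :=
  ⟨⟨fun _ => 0, fun _ => precS_zero F 0⟩⟩

instance : AddCommMonoid (PathS F) where
  nsmul := nsmulRec
  add := (· + ·)
  zero := 0
  add_assoc := by intro a b c; apply Subtype.ext; funext w; exact add_assoc _ _ _
  zero_add := by intro a; apply Subtype.ext; funext w; exact zero_add _
  add_zero := by intro a; apply Subtype.ext; funext w; exact add_zero _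
  add_comm := by intro a b; apply Subtype.ext; funext w; exact add_comm _ _

@[simp] theorem pathS_add_apply (p q : PathS F) (w : D) : (p + q).1 w = p.1 w + q.1 w := rfl

@[simp] theorem pathS_zero_apply (w : D) : (0 : PathS F).1 w = 0 := rfl

/-- The W-structure on paths of sections. -/
def Rlim : WS (PathS F) where
  rel p q := ∃ v, ∀ w, precS F (p.1 w) (q.1 v)
  trans := by
    rintro a b c ⟨v, hv⟩ ⟨v', hv'⟩
    exact ⟨v', fun w => precS_trans F (hv w) (hv' v)⟩
  zero := fun x => ⟨[], fun w => precS_zero F _⟩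
  addc := by
    rintro a b c d ⟨v, hv⟩ ⟨v', hv'⟩
    set M : ℕ := max v.length v'.length + 1 with hM
    refine ⟨ones M, fun w => ?_⟩
    refine precS_add F (precS_trans F (hv w) (b.2 ?_)) (precS_trans F (hv' w) (d.2 ?_))
    · exact dlt_ones_nil v (by omega)
    · exact dlt_ones_nil v' (by omega)
  interp := by
    rintro a b ⟨v, hv⟩
    refine ⟨⟨fun s => b.1 ((v ++ [true, false]) ++ s), fun h => b.2 (dlt_append_left h)⟩,
      ⟨[], fun w => ?_⟩, ⟨v ++ [true], fun s => b.2 ?_⟩⟩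
    · refine precS_trans F (hv w) (b.2 ?_)
      have : DLt v (v ++ true :: [false]) := dlt_right v [false]
      simpa using this
    · show DLt ((v ++ [true, false]) ++ s) (v ++ [true])
      have : DLt ((true : Bool) :: false :: s) (true :: ([] : D)) :=
        DLt.cons true (DLt.fn s)
      have h2 := dlt_append_left (w := v) this
      simpa using h2

/-- The underlying Cu-semigroup of the limit (before cutting to the ideal). -/
def SL : Type u := Cpl (Rlim F)

instance : AddCommMonoid (SL F) := inferInstanceAs (AddCommMonoid (Cpl (Rlim F)))
instance : PartialOrder (SL F) := inferInstanceAs (PartialOrder (Cpl (Rlim F)))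

theorem cuSL : CuAxioms (SL F) := cplCu (Rlim F)

/-- Evaluation of a path at coordinate `i`: the supremum of the values along
the cofinal anchors. -/
theorem fi_mono (i : I) (p : PathS F) :
    Monotone fun n => ((p.1 (ones n)).1 i) := by
  refine monotone_nat_of_le_succ fun n => ?_
  exact (p.2 (dlt_ones_lt (Nat.lt_succ_self n)) i).le

noncomputable def fi (i : I) (p : PathS F) : (F.obj i).carrier :=
  supT (F.obj i).cu (fun n => ((p.1 (ones n)).1 i)) (fi_mono F i p)

theorem fi_zero (i : I) : fi F i 0 = 0 := by
  unfold fi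
  rw [supT_congr (F.obj i).cu
    (show (fun n => (((0 : PathS F).1 (ones n)).1 i)) = fun _ => (0 : (F.obj i).carrier)
      from rfl) _ monotone_const]
  exact supT_const _ 0

theorem fi_add (i : I) (p q : PathS F) : fi F i (p + q) = fi F i p + fi F i q := by
  unfold fi
  refine supT_eq_of_isLUB _ _ _ ?_
  exact (F.obj i).cu.O4 _ _ (fi_mono F i p) (fi_mono F i q) _ _
    (supT_isLUB _ _ (fi_mono F i p)) (supT_isLUB _ _ (fi_mono F i q))

theorem val_le_fi (i : I) (p : PathS F) (w : D) : (p.1 w).1 i ≤ fi F i p := by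
  have h1 : WayBelow ((p.1 w).1 i) ((p.1 (ones (w.length + 1))).1 i) :=
    p.2 (dlt_ones_nil w (Nat.lt_succ_self _)) i
  exact h1.le.trans (le_supT _ _ (fi_mono F i p) (w.length + 1))

theorem fi_le (i : I) (p : PathS F) {c : (F.obj i).carrier}
    (h : ∀ n, ((p.1 (ones n)).1 i) ≤ c) : fi F i p ≤ c :=
  supT_le _ _ (fi_mono F i p) h

theorem fi_prec (i : I) {p q : PathS F} (h : (Rlim F).rel p q) :
    WayBelow (fi F i p) (fi F i q) := by
  obtain ⟨v, hv⟩ := h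
  have h1 : fi F i p ≤ (q.1 v).1 i := fi_le F i p (fun n => (hv (ones n) i).le)
  have h2 : WayBelow ((q.1 v).1 i) ((q.1 (v ++ [true])).1 i) := by
    refine q.2 ?_ i
    simpa using dlt_right v []
  have h3 : (q.1 (v ++ [true])).1 i ≤ fi F i q := val_le_fi F i q _
  exact h2.mono h1 h3

/-- Projection to the `i`-th coordinate. -/
noncomputable def pic (i : I) : SL F → (F.obj i).carrier :=
  ext (Rlim F) (F.obj i).cu (fi F i) (fun h => fi_prec F i h)

theorem pic_isCuHom (i : I) : IsCuHom (pic F i) :=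
  ext_isCuHom (Rlim F) (F.obj i).cu (fi F i) (fi_zero F i) (fi_add F i)
    (fun h => fi_prec F i h)

theorem pic_mk (i : I) (σ : CSeq (Rlim F)) :
    pic F i (mkc (Rlim F) σ) = supT (F.obj i).cu (fun n => fi F i (σ.1 n))
      (ext_mono_seq (Rlim F) (fi F i) (fun h => fi_prec F i h) σ) := rfl

/-- Generic: a Cu-morphism maps chosen suprema to chosen suprema. -/
theorem map_supT_of_isCuHom {M : Type v} {N : Type w} [AddCommMonoid M] [PartialOrder M]
    [AddCommMonoid N] [PartialOrder N] (cuM : CuAxioms M) (cuN : CuAxioms N)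
    {h : M → N} (hh : IsCuHom h) (s : ℕ → M) (hs : Monotone s) :
    h (supT cuM s hs) = supT cuN (fun n => h (s n)) (fun a b hab => hh.mono (hs hab)) := by
  refine (supT_eq_of_isLUB cuN _ _ ?_).symm
  exact hh.map_seqSup s hs _ (supT_isLUB cuM s hs)

/-- term values are below the projection -/
theorem termval_le_pic (i : I) (σ : CSeq (Rlim F)) (n : ℕ) (w : D) :
    (((σ.1 n).1 w).1 i) ≤ pic F i (mkc (Rlim F) σ) := by
  rw [pic_mk]
  exact (val_le_fi F i (σ.1 n) w).trans
    (le_supT (F.obj i).cu (fun n => fi F i (σ.1 n)) _ n)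

/-- Naturality of the projections. -/
theorem pic_natural {i j : I} (η : i ⟶ j) (x : SL F) :
    (F.map η).1 (pic F i x) = pic F j x := by
  obtain ⟨σ, rfl⟩ := Quotient.exists_rep x
  rw [show (Quotient.mk (cev (Rlim F)) σ : SL F) = mkc (Rlim F) σ from rfl]
  rw [pic_mk, pic_mk]
  rw [map_supT_of_isCuHom (F.obj i).cu (F.obj j).cu (F.map η).2.1]
  have : (fun n => (F.map η).1 (fi F i (σ.1 n))) = fun n => fi F j (σ.1 n) := by
    funext n
    unfold fi
    rw [map_supT_of_isCuHom (F.obj i).cu (F.obj j).cu (F.map η).2.1]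
    have : (fun m => (F.map η).1 (((σ.1 n).1 (ones m)).1 i))
        = fun m => ((σ.1 n).1 (ones m)).1 j := by
      funext m
      exact ((σ.1 n).1 (ones m)).2 η
    exact supT_congr (F.obj j).cu this _ _
  exact supT_congr (F.obj j).cu this _ _

end Limit

end CuP
namespace CuP

open Set CategoryTheory

set_option linter.unusedSectionVars false

section Limit2

variable {I : Type u} [SmallCategory I] (F : I ⥤ CuscCat.{u})

/-- The ideal of the pre-limit generated by the scale-bounded elements. -/
inductive InL : SL F → Prop
  | base (x : SL F) : (∀ i, pic F i x ∈ (F.obj i).scale) → InL x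
  | zero : InL 0
  | add (x y : SL F) : InL x → InL y → InL (x + y)
  | bound (x y : SL F) : x ≤ y → InL y → InL x
  | lsup (s : ℕ → SL F) (hs : Monotone s) (h : ∀ n, InL (s n)) (a : SL F)
      (ha : IsLUB (Set.range s) a) : InL a

/-- The carrier of the limit object. -/
abbrev LS : Type u := {x : SL F // InL F x}

instance : Add (LS F) := ⟨fun x y => ⟨x.1 + y.1, InL.add _ _ x.2 y.2⟩⟩
instance : Zero (LS F) := ⟨⟨0, InL.zero⟩⟩

instance : AddCommMonoid (LS F) where
  nsmul := nsmulRec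
  add := (· + ·)
  zero := 0
  add_assoc := by intro a b c; apply Subtype.ext; exact add_assoc _ _ _
  zero_add := by intro a; apply Subtype.ext; exact zero_add _
  add_zero := by intro a; apply Subtype.ext; exact add_zero _
  add_comm := by intro a b; apply Subtype.ext; exact add_comm _ _

instance : PartialOrder (LS F) := Subtype.partialOrder _

theorem ls_le_iff (x y : LS F) : x ≤ y ↔ x.1 ≤ y.1 := Iff.rfl

@[simp] theorem ls_add_val (x y : LS F) : (x + y).1 = x.1 + y.1 := rfl

@[simp] theorem ls_zero_val : (0 : LS F).1 = 0 := rfl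

theorem ls_coe_mono {s : ℕ → LS F} (hs : Monotone s) : Monotone (fun n => (s n).1) :=
  fun a b h => hs h

/-- (T1) An `SL`-LUB of the coercions is an `LS`-LUB. -/
theorem ls_isLUB_of {s : ℕ → LS F} {a : LS F}
    (h : IsLUB (Set.range fun n => (s n).1) a.1) : IsLUB (Set.range s) a := by
  rw [isLUB_range_iff] at h ⊢
  exact ⟨fun n => h.1 n, fun b hb => h.2 b.1 (fun n => hb n)⟩

/-- (T2) An `LS`-LUB is an `SL`-LUB of coercions. -/
theorem ls_isLUB_to {s : ℕ → LS F} (hs : Monotone s) {a : LS F}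
    (h : IsLUB (Set.range s) a) : IsLUB (Set.range fun n => (s n).1) a.1 := by
  have hmono := ls_coe_mono F hs
  set A : SL F := supT (cuSL F) _ hmono with hA
  have hInA : InL F A := InL.lsup _ hmono (fun n => (s n).2) _ (supT_isLUB (cuSL F) _ hmono)
  have h2 : IsLUB (Set.range s) (⟨A, hInA⟩ : LS F) :=
    ls_isLUB_of F (supT_isLUB (cuSL F) _ hmono)
  have h3 : a = ⟨A, hInA⟩ := h.unique h2
  rw [h3]
  exact supT_isLUB (cuSL F) _ hmono

/-- (T3) way-below transfers from `SL` to `LS`. -/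
theorem ls_wb_of {x y : LS F} (h : WayBelow x.1 y.1) : WayBelow x y := by
  intro s hs a ha hya
  obtain ⟨n, hn⟩ := h (fun n => (s n).1) (ls_coe_mono F hs) a.1 (ls_isLUB_to F hs ha) hya
  exact ⟨n, hn⟩

/-- (T4) way-below transfers from `LS` to `SL`. -/
theorem ls_wb_to {x y : LS F} (h : WayBelow x y) : WayBelow x.1 y.1 := by
  -- use the approximants of y.1 in SL
  obtain ⟨c, hc1, hc2⟩ := (cuSL F).O2 y.1
  have hcle : ∀ n, c n ≤ y.1 := fun n => (isLUB_range_iff.1 hc2).1 n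
  set s : ℕ → LS F := fun n => ⟨c n, InL.bound _ _ (hcle n) y.2⟩ with hss
  have hsmono : Monotone s := by
    intro a b hab
    show c a ≤ c b
    rcases eq_or_lt_of_le hab with rfl | h'
    · exact le_rfl
    · clear hab
      induction b with
      | zero => omega
      | succ b ih =>
        rcases Nat.lt_succ_iff_lt_or_eq.1 h' with h'' | h''
        · exact (ih h'').trans (hc1 b).le
        · subst h''; exact (hc1 a).le
  have hslub : IsLUB (Set.range s) y := by
    refine ls_isLUB_of F ?_
    exact hc2
  obtain ⟨n, hn⟩ := h s hsmono y hslub le_rfl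
  have h1 : x.1 ≤ c n := hn
  exact (hc1 n).mono h1 (hcle (n+1))

theorem cuLS : CuAxioms (LS F) where
  add_le_add_left := by
    intro a b h c
    exact (cuSL F).add_le_add_left a.1 b.1 h c.1
  zero_le := fun a => (cuSL F).zero_le a.1
  O1 := by
    intro s hs
    have hmono := ls_coe_mono F hs
    refine ⟨⟨supT (cuSL F) _ hmono,
      InL.lsup _ hmono (fun n => (s n).2) _ (supT_isLUB (cuSL F) _ hmono)⟩, ?_⟩
    exact ls_isLUB_of F (supT_isLUB (cuSL F) _ hmono)
  O2 := by
    intro x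
    obtain ⟨c, hc1, hc2⟩ := (cuSL F).O2 x.1
    have hcle : ∀ n, c n ≤ x.1 := fun n => (isLUB_range_iff.1 hc2).1 n
    refine ⟨fun n => ⟨c n, InL.bound _ _ (hcle n) x.2⟩, fun n => ls_wb_of F (hc1 n), ?_⟩
    exact ls_isLUB_of F hc2
  O3 := by
    intro x' x y' y h₁ h₂
    exact ls_wb_of F ((cuSL F).O3 _ _ _ _ (ls_wb_to F h₁) (ls_wb_to F h₂))
  O4 := by
    intro s t hs ht a b ha hb
    have := (cuSL F).O4 _ _ (ls_coe_mono F hs) (ls_coe_mono F ht) _ _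
      (ls_isLUB_to F hs ha) (ls_isLUB_to F ht hb)
    exact ls_isLUB_of F this

/-- The projection, restricted to `LS`. -/
noncomputable def picL (i : I) (x : LS F) : (F.obj i).carrier := pic F i x.1

theorem picL_isCuHom (i : I) : IsCuHom (picL F i) := by
  have hp := pic_isCuHom F i
  refine ⟨⟨?_, ?_, ?_⟩, ?_, ?_⟩
  · exact hp.map_zero
  · intro x y; exact hp.map_add x.1 y.1
  · intro x y h; exact hp.mono h
  · intro x y h; exact hp.map_wayBelow _ _ (ls_wb_to F h)
  · intro s hs a ha
    exact hp.map_seqSup _ (ls_coe_mono F hs) _ (ls_isLUB_to F hs ha)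

/-- The scale of the limit. -/
def ThetaL : Set (LS F) := {x | ∀ i, pic F i x.1 ∈ (F.obj i).scale}

theorem thetaL_isScale : IsScale (ThetaL F) := by
  constructor
  · intro x y hxy hy i
    exact (F.obj i).isScale.lower _ _ ((pic_isCuHom F i).mono hxy) (hy i)
  · intro s hs h a ha i
    refine (F.obj i).isScale.seqSup_mem (fun n => pic F i (s n).1) ?_ (fun n => h n i) _ ?_
    · intro m n hmn
      exact (pic_isCuHom F i).mono (hs hmn)
    · exact (pic_isCuHom F i).map_seqSup _ (ls_coe_mono F hs) _ (ls_isLUB_to F hs ha)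
  · intro J hJ hsub
    rw [Set.eq_univ_iff_forall]
    have key : ∀ z : SL F, InL F z → ∀ h : InL F z, (⟨z, h⟩ : LS F) ∈ J := by
      intro z hz
      induction hz with
      | base x hx =>
        intro h
        exact hsub (fun i => hx i)
      | zero =>
        intro h
        have : (⟨0, h⟩ : LS F) = (0 : LS F) := Subtype.ext rfl
        rw [this]; exact hJ.zero_mem
      | add x y hx hy ihx ihy =>
        intro h
        have : (⟨x + y, h⟩ : LS F) = (⟨x, hx⟩ : LS F) + (⟨y, hy⟩ : LS F) := Subtype.ext rfl
        rw [this]; exact hJ.add_mem _ _ (ihx hx) (ihy hy)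
      | bound x y hxy hy ihy =>
        intro h
        exact hJ.lower ⟨x, h⟩ ⟨y, hy⟩ hxy (ihy hy)
      | lsup s hs h a ha =>
        intro hIn
        rename_i ih
        refine hJ.seqSup_mem (fun n => ⟨s n, h n⟩) ?_ (fun n => ih n (h n)) ⟨a, hIn⟩ ?_
        · intro m n hmn; exact hs hmn
        · exact ls_isLUB_of F ha
    intro x
    have := key x.1 x.2 x.2
    simpa using this

end Limit2

end CuP
namespace CuP

open Set CategoryTheory

set_option linter.unusedSectionVars false

section Limit3

variable {I : Type u} [SmallCategory I] (F : I ⥤ CuscCat.{u})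
variable (T : CuscCat.{u}) (g : ∀ i, T ⟶ F.obj i)
variable (gnat : ∀ {i j : I} (η : i ⟶ j) (t : T.carrier), (F.map η).1 ((g i).1 t) = (g j).1 t)

/-- block nodes -/
def node (n : ℕ) (s : D) : D := ones n ++ false :: s

theorem node_eq (n : ℕ) (s : D) : node n s = (ones n ++ [false]) ++ s := by
  simp [node]

theorem dlt_node_strict {n : ℕ} {s s' : D} (h : DLt s s') : DLt (node n s) (node n s') := by
  rw [node_eq, node_eq]
  exact dlt_append_left h

theorem dlt_node_lt {n m : ℕ} (h : n < m) (s s' : D) : DLt (node n s) (node m s') :=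
  dlt_block h s s'

theorem dlt_node_anchor (n : ℕ) (s : D) : DLt (node n s) (ones n) := dlt_left _ _

theorem dlt_anchor_node {n m : ℕ} (h : n < m) (s : D) : DLt (ones n) (node m s) :=
  dlt_ones (ones n) (by simpa using h) _

section Med

variable (hgnat : ∀ {i j : I} (η : i ⟶ j) (t : T.carrier),
  (F.map η).1 ((g i).1 t) = (g j).1 t)

/-- The section induced by an element of the cone source. -/
def gsec (t : T.carrier) : Sec F := ⟨fun i => (g i).1 t, fun η => hgnat η t⟩

theorem gsec_prec {a b : T.carrier} (h : WayBelow a b) :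
    precS F (gsec F T g hgnat a) (gsec F T g hgnat b) :=
  fun i => (g i).2.1.map_wayBelow _ _ h

theorem gsec_mono {a b : T.carrier} (h : a ≤ b) (i : I) :
    (gsec F T g hgnat a).1 i ≤ (gsec F T g hgnat b).1 i := (g i).2.1.mono h

theorem gsec_add (a b : T.carrier) :
    gsec F T g hgnat (a + b) = gsec F T g hgnat a + gsec F T g hgnat b := by
  apply Subtype.ext; funext i; exact (g i).2.1.map_add a b

/-- shorthand for the chosen path below `t` in `T`. -/
noncomputable def ut (t : T.carrier) : D → T.carrier := upath T.cu t

/-- The `n`-th path of the mediating image of `t`. -/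
noncomputable def rpath (t : T.carrier) (n : ℕ) : PathS F :=
  ⟨fun s => gsec F T g hgnat (ut T t (node n s)),
   fun h => gsec_prec F T g hgnat (upath_mono T.cu t (dlt_node_strict h))⟩

/-- The mediating sequence. -/
noncomputable def hseq (t : T.carrier) : CSeq (Rlim F) :=
  ⟨fun n => rpath F T g hgnat t n, by
    intro n
    refine ⟨[], fun s => ?_⟩
    exact gsec_prec F T g hgnat (upath_mono T.cu t (dlt_node_lt (Nat.lt_succ_self n) s []))⟩

/-- The mediating map into the pre-limit. -/
noncomputable def hmed (t : T.carrier) : SL F := mkc (Rlim F) (hseq F T g hgnat t)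

/-- Anchor domination from way-below. -/
theorem anchor_le {a b : T.carrier} (h : WayBelow a b) :
    ∃ m, a ≤ ut T b (ones m) :=
  h (fun n => upath T.cu b (ones n)) (upath_anchor_mono T.cu b) b (upath_isLUB T.cu b) le_rfl

/-- The basic rel-producing lemma. -/
theorem rel_rpath_of_le {t t' : T.carrier} {n m : ℕ}
    (h : ut T t (ones n) ≤ ut T t' (ones m)) :
    (Rlim F).rel (rpath F T g hgnat t n) (rpath F T g hgnat t' (m + 1)) := by
  refine ⟨[], fun s => ?_⟩
  have h1 : WayBelow (ut T t (node n s)) (ut T t (ones n)) :=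
    upath_mono T.cu t (dlt_node_anchor n s)
  have h2 : WayBelow (ut T t' (ones m)) (ut T t' (node (m + 1) [])) :=
    upath_mono T.cu t' (dlt_anchor_node (Nat.lt_succ_self m) [])
  exact gsec_prec F T g hgnat ((h1.mono le_rfl h).trans h2)

theorem hmed_mono {t t' : T.carrier} (h : t ≤ t') :
    hmed F T g hgnat t ≤ hmed F T g hgnat t' := by
  intro n
  have h1 : WayBelow (ut T t (ones n)) t' := (upath_wb T.cu t (ones n)).mono le_rfl h
  obtain ⟨m, hm⟩ := anchor_le T h1
  exact ⟨m + 1, rel_rpath_of_le F T g hgnat hm⟩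

theorem hmed_zero : hmed F T g hgnat 0 = 0 := by
  erw [mkc_zero]
  apply congrArg (mkc (Rlim F))
  apply Subtype.ext; funext n
  apply Subtype.ext; funext s
  apply Subtype.ext; funext i
  show (g i).1 (ut T 0 (node n s)) = 0
  have h0 : ut T 0 (node n s) = 0 :=
    le_antisymm (upath_le T.cu 0 _) (T.cu.zero_le _)
  rw [h0]
  exact (g i).2.1.map_zero

theorem hmed_add (t t' : T.carrier) :
    hmed F T g hgnat (t + t') = hmed F T g hgnat t + hmed F T g hgnat t' := by
  erw [hmed, hmed, hmed, mkc_add]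
  apply le_antisymm
  · intro n
    have h1 : WayBelow (ut T (t + t') (ones n)) (t + t') := upath_wb T.cu _ _
    have hsum : IsLUB (Set.range fun m => ut T t (ones m) + ut T t' (ones m)) (t + t') :=
      T.cu.O4 _ _ (upath_anchor_mono T.cu t) (upath_anchor_mono T.cu t') _ _
        (upath_isLUB T.cu t) (upath_isLUB T.cu t')
    obtain ⟨m, hm⟩ := h1 _ (fun a b hab =>
        PoMAxioms.add_le_add T.cu.toPoMAxioms (upath_anchor_mono T.cu t hab)
          (upath_anchor_mono T.cu t' hab)) _ hsum le_rfl
    refine ⟨m + 1, ⟨[], fun s => ?_⟩⟩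
    intro i
    have hv : WayBelow (ut T (t+t') (node n s)) (ut T (t+t') (ones n)) :=
      upath_mono T.cu _ (dlt_node_anchor n s)
    have h2 : WayBelow ((g i).1 (ut T (t+t') (node n s)))
        ((g i).1 (ut T t (ones m) + ut T t' (ones m))) :=
      (g i).2.1.map_wayBelow _ _ (hv.mono le_rfl hm)
    have h3 : (g i).1 (ut T t (ones m) + ut T t' (ones m))
        = (g i).1 (ut T t (ones m)) + (g i).1 (ut T t' (ones m)) := (g i).2.1.map_add _ _
    have h4 : WayBelow ((g i).1 (ut T t (ones m)) + (g i).1 (ut T t' (ones m)))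
        ((g i).1 (ut T t (node (m+1) [])) + (g i).1 (ut T t' (node (m+1) []))) :=
      (F.obj i).cu.O3 _ _ _ _
        ((g i).2.1.map_wayBelow _ _ (upath_mono T.cu t (dlt_anchor_node (Nat.lt_succ_self m) [])))
        ((g i).2.1.map_wayBelow _ _ (upath_mono T.cu t' (dlt_anchor_node (Nat.lt_succ_self m) [])))
    rw [h3] at h2
    exact h2.trans h4
  · intro n
    have h1 : WayBelow (ut T t (ones n) + ut T t' (ones n)) (t + t') :=
      T.cu.O3 _ _ _ _ (upath_wb T.cu t _) (upath_wb T.cu t' _)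
    obtain ⟨m, hm⟩ := h1 _ (upath_anchor_mono T.cu (t + t')) _ (upath_isLUB T.cu (t+t')) le_rfl
    refine ⟨m + 1, ⟨[], fun s => ?_⟩⟩
    intro i
    have h2 : WayBelow ((g i).1 (ut T t (node n s)) + (g i).1 (ut T t' (node n s)))
        ((g i).1 (ut T t (ones n)) + (g i).1 (ut T t' (ones n))) :=
      (F.obj i).cu.O3 _ _ _ _
        ((g i).2.1.map_wayBelow _ _ (upath_mono T.cu t (dlt_node_anchor n s)))
        ((g i).2.1.map_wayBelow _ _ (upath_mono T.cu t' (dlt_node_anchor n s)))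
    have h3 : (g i).1 (ut T t (ones n)) + (g i).1 (ut T t' (ones n))
        = (g i).1 (ut T t (ones n) + ut T t' (ones n)) := ((g i).2.1.map_add _ _).symm
    have h4 : (g i).1 (ut T t (ones n) + ut T t' (ones n)) ≤ (g i).1 (ut T (t+t') (ones m)) :=
      (g i).2.1.mono hm
    have h5 : WayBelow ((g i).1 (ut T (t+t') (ones m)))
        ((g i).1 (ut T (t+t') (node (m+1) []))) :=
      (g i).2.1.map_wayBelow _ _ (upath_mono T.cu _ (dlt_anchor_node (Nat.lt_succ_self m) []))
    rw [h3] at h2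
    exact (h2.mono le_rfl h4).trans h5

theorem hmed_wayBelow {t t₂ : T.carrier} (h : WayBelow t t₂) :
    WayBelow (hmed F T g hgnat t) (hmed F T g hgnat t₂) := by
  obtain ⟨m, hm⟩ := anchor_le T h
  refine wb_intro (Rlim F) (m + 1) ?_
  intro n
  exact rel_rpath_of_le F T g hgnat ((upath_le T.cu t (ones n)).trans hm)

theorem hmed_seqSup (s : ℕ → T.carrier) (hs : Monotone s) (t : T.carrier)
    (ht : IsLUB (Set.range s) t) :
    IsLUB (Set.range fun k => hmed F T g hgnat (s k)) (hmed F T g hgnat t) := by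
  rw [isLUB_range_iff]
  constructor
  · intro k
    exact hmed_mono F T g hgnat (ht.1 ⟨k, rfl⟩)
  · intro c hc
    rw [← mkc_out (Rlim F) c]
    intro n
    -- find k with the (n+1)-anchor of t below s k
    obtain ⟨k, hk⟩ := (upath_wb T.cu t (ones (n+1))) s hs t ht le_rfl
    have h1 : WayBelow (ut T t (ones n)) (s k) :=
      (upath_mono T.cu t (dlt_ones_lt (Nat.lt_succ_self n))).mono le_rfl hk
    obtain ⟨m, hm⟩ := anchor_le T h1
    have hrel : (Rlim F).rel (rpath F T g hgnat t n) (rpath F T g hgnat (s k) (m+1)) :=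
      rel_rpath_of_le F T g hgnat hm
    have h2 : hmed F T g hgnat (s k) ≤ mkc (Rlim F) (Quotient.out c) := by
      erw [mkc_out]; exact hc k
    obtain ⟨j, hj⟩ := h2 (m + 1)
    exact ⟨j, (Rlim F).trans hrel hj⟩

theorem hmed_compat (i : I) (t : T.carrier) :
    pic F i (hmed F T g hgnat t) = (g i).1 t := by
  apply le_antisymm
  · rw [hmed, pic_mk]
    refine supT_le _ _ _ ?_
    intro n
    refine fi_le F i _ ?_
    intro j
    show (g i).1 (ut T t (node n (ones j))) ≤ (g i).1 t
    exact (g i).2.1.mono (upath_le T.cu t _)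
  · have hLUB : IsLUB (Set.range fun m => (g i).1 (ut T t (ones m))) ((g i).1 t) :=
      (g i).2.1.map_seqSup _ (upath_anchor_mono T.cu t) t (upath_isLUB T.cu t)
    refine (isLUB_range_iff.1 hLUB).2 _ ?_
    intro m
    have h1 : (g i).1 (ut T t (ones m)) ≤ (g i).1 (ut T t (node (m+1) [])) :=
      (g i).2.1.mono (upath_mono T.cu t (dlt_anchor_node (Nat.lt_succ_self m) [])).le
    have h2 : ((rpath F T g hgnat t (m+1)).1 []).1 i ≤ fi F i (rpath F T g hgnat t (m+1)) :=
      val_le_fi F i _ []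
    have h3 : fi F i (rpath F T g hgnat t (m+1)) ≤ pic F i (hmed F T g hgnat t) := by
      rw [hmed, pic_mk]
      exact le_supT _ (fun n => fi F i ((hseq F T g hgnat t).1 n)) _ (m+1)
    exact (h1.trans h2).trans h3

theorem hmed_inL (t : T.carrier) : InL F (hmed F T g hgnat t) := by
  set J : Set T.carrier := {t | InL F (hmed F T g hgnat t)} with hJ
  have hIdeal : IsCuIdeal J := by
    constructor
    · show InL F (hmed F T g hgnat 0)
      rw [hmed_zero]; exact InL.zero
    · intro x y hx hy
      show InL F (hmed F T g hgnat (x + y))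
      rw [hmed_add]; exact InL.add _ _ hx hy
    · intro x y hxy hy
      exact InL.bound _ _ (hmed_mono F T g hgnat hxy) hy
    · intro s hs h a ha
      exact InL.lsup _ (fun u v huv => hmed_mono F T g hgnat (hs huv)) h _
        (hmed_seqSup F T g hgnat s hs a ha)
  have hsub : T.scale ⊆ J := by
    intro θ hθ
    refine InL.base _ ?_
    intro i
    rw [hmed_compat]
    exact (g i).2.2 θ hθ
  have := T.isScale.generates J hIdeal hsub
  rw [hJ] at this
  have : t ∈ ({t | InL F (hmed F T g hgnat t)} : Set T.carrier) := this ▸ Set.mem_univ t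
  exact this

end Med

end Limit3

end CuP
namespace CuP

open Set CategoryTheory

set_option linter.unusedSectionVars false

section Limit4

variable {I : Type u} [SmallCategory I] (F : I ⥤ CuscCat.{u})
variable (T : CuscCat.{u}) (g : ∀ i, T ⟶ F.obj i)
variable (hgnat : ∀ {i j : I} (η : i ⟶ j) (t : T.carrier),
  (F.map η).1 ((g i).1 t) = (g j).1 t)

theorem hmed_unique (k : T.carrier → LS F) (hk : IsCuHom k)
    (hkc : ∀ (i : I) (t : T.carrier), pic F i (k t).1 = (g i).1 t) (t : T.carrier) :
    (k t).1 = hmed F T g hgnat t := by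
  have k1wb : ∀ {a b : T.carrier}, WayBelow a b → WayBelow (k a).1 (k b).1 :=
    fun h => ls_wb_to F (hk.map_wayBelow _ _ h)
  apply le_antisymm
  · -- (k t).1 ≤ hmed t
    have hLUB : IsLUB (Set.range fun m => (k (ut T t (ones m))).1) (k t).1 := by
      have h1 := hk.map_seqSup _ (fun a b hab => upath_anchor_mono T.cu t hab) t
        (upath_isLUB T.cu t)
      exact ls_isLUB_to F (fun a b hab => hk.mono (upath_anchor_mono T.cu t hab)) h1
    refine (isLUB_range_iff.1 hLUB).2 _ ?_
    intro m
    rw [← mkc_out (Rlim F) ((k (ut T t (ones m))).1)]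
    intro j
    refine ⟨m + 1, ⟨[], fun w => ?_⟩⟩
    intro i
    set τ := Quotient.out ((k (ut T t (ones m))).1) with hτ
    have h1 : WayBelow (((τ.1 j).1 w).1 i) (((τ.1 j).1 (w ++ [true])).1 i) := by
      refine (τ.1 j).2 ?_ i
      simpa using dlt_right w []
    have h2 : (((τ.1 j).1 (w ++ [true])).1 i) ≤ pic F i (mkc (Rlim F) τ) :=
      termval_le_pic F i τ j (w ++ [true])
    have h3 : pic F i (mkc (Rlim F) τ) = (g i).1 (ut T t (ones m)) := by
      erw [hτ, mkc_out]; exact hkc i _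
    have h4 : WayBelow ((g i).1 (ut T t (ones m))) ((g i).1 (ut T t (node (m+1) []))) :=
      (g i).2.1.map_wayBelow _ _ (upath_mono T.cu t (dlt_anchor_node (Nat.lt_succ_self m) []))
    exact (h1.mono le_rfl (h2.trans (le_of_eq h3))).trans h4
  · -- hmed t ≤ (k t).1
    rw [← mkc_out (Rlim F) ((k t).1)]
    intro n
    set A := (k (ut T t (ones n))).1 with hA
    set B := (k (ut T t (ones (n+1)))).1 with hB
    set C := (k (ut T t (ones (n+2)))).1 with hC
    have hAB : WayBelow A B := k1wb (upath_mono T.cu t (dlt_ones_lt (Nat.lt_succ_self n)))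
    have hBC : WayBelow B C := k1wb (upath_mono T.cu t (dlt_ones_lt (Nat.lt_succ_self (n+1))))
    rw [← mkc_out (Rlim F) A, ← mkc_out (Rlim F) B] at hAB
    rw [← mkc_out (Rlim F) B, ← mkc_out (Rlim F) C] at hBC
    obtain ⟨m₁, h₁⟩ := wb_elim (Rlim F) hAB
    obtain ⟨m₂, h₂⟩ := wb_elim (Rlim F) hBC
    obtain ⟨v₂, hv₂⟩ := h₂ m₁
    have hbound : ∀ i, pic F i A ≤ (((Quotient.out C).1 m₂).1 v₂).1 i := by
      intro i
      conv_lhs => rw [← mkc_out (Rlim F) A]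
      rw [pic_mk]
      refine supT_le _ _ _ ?_
      intro r
      refine fi_le F i _ ?_
      intro j
      obtain ⟨v₁, hv₁⟩ := h₁ r
      exact ((hv₁ (ones j) i).le).trans ((hv₂ v₁ i).le)
    have hrel : (Rlim F).rel (rpath F T g hgnat t n) ((Quotient.out C).1 m₂) := by
      refine ⟨v₂, fun s => ?_⟩
      intro i
      have hval : WayBelow ((g i).1 (ut T t (node n s))) ((g i).1 (ut T t (ones n))) :=
        (g i).2.1.map_wayBelow _ _ (upath_mono T.cu t (dlt_node_anchor n s))
      have heq : (g i).1 (ut T t (ones n)) = pic F i A := (hkc i _).symm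
      exact hval.mono le_rfl (heq.le.trans (hbound i))
    have hCle : mkc (Rlim F) (Quotient.out C) ≤ mkc (Rlim F) (Quotient.out ((k t).1)) := by
      erw [mkc_out, mkc_out]
      exact hk.mono (upath_le T.cu t (ones (n+2)))
    obtain ⟨j, hj⟩ := hCle m₂
    exact ⟨j, (Rlim F).trans hrel hj⟩

end Limit4

section LimitGlue

variable {I : Type u} [SmallCategory I] (F : I ⥤ CuscCat.{u})

/-- The limit object. -/
noncomputable def limPt : CuscCat.{u} :=
  { carrier := LS F
    cu := cuLS F
    scale := ThetaL F
    isScale := thetaL_isScale F }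

/-- The limit cone. -/
noncomputable def limCone : Limits.Cone F where
  pt := limPt F
  π :=
    { app := fun i => ⟨picL F i, ⟨picL_isCuHom F i, fun x hx => hx i⟩⟩
      naturality := by
        intro i j η
        apply Subtype.ext
        funext x
        show picL F j x = (F.map η).1 (picL F i x)
        exact (pic_natural F η x.1).symm }

theorem cone_nat (s : Limits.Cone F) {i j : I} (η : i ⟶ j) (t : s.pt.carrier) :
    (F.map η).1 ((s.π.app i).1 t) = (s.π.app j).1 t := by
  have h := s.π.naturality η
  have h2 : s.π.app j = s.π.app i ≫ F.map η := by
    simpa using h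
  rw [h2]
  rfl

/-- The mediating morphism as an element of `LS`. -/
noncomputable def limLift (s : Limits.Cone F) (t : s.pt.carrier) : LS F :=
  ⟨hmed F s.pt (fun i => s.π.app i) (fun η t => cone_nat F s η t) t,
   hmed_inL F s.pt (fun i => s.π.app i) (fun η t => cone_nat F s η t) t⟩

theorem limLift_isCuHom (s : Limits.Cone F) : IsCuHom (limLift F s) := by
  constructor
  · constructor
    · exact Subtype.ext (hmed_zero F s.pt (fun i => s.π.app i) (fun η t => cone_nat F s η t))
    · intro a b
      exact Subtype.ext (hmed_add F s.pt (fun i => s.π.app i) (fun η t => cone_nat F s η t) a b)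
    · intro a b hab
      show hmed F s.pt (fun i => s.π.app i) (fun η t => cone_nat F s η t) a ≤ hmed F s.pt (fun i => s.π.app i) (fun η t => cone_nat F s η t) b
      exact hmed_mono F s.pt (fun i => s.π.app i) (fun η t => cone_nat F s η t) hab
  · intro a b hab
    exact ls_wb_of F (hmed_wayBelow F s.pt (fun i => s.π.app i) (fun η t => cone_nat F s η t) hab)
  · intro q hq a ha
    exact ls_isLUB_of F (hmed_seqSup F s.pt (fun i => s.π.app i) (fun η t => cone_nat F s η t) q hq a ha)

noncomputable def limIsLimit : Limits.IsLimit (limCone F) where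
  lift s := ⟨limLift F s, ⟨limLift_isCuHom F s, by
    intro t ht i
    show pic F i (hmed F s.pt (fun i => s.π.app i) (fun η t => cone_nat F s η t) t) ∈ (F.obj i).scale
    rw [hmed_compat F s.pt (fun i => s.π.app i) (fun η t => cone_nat F s η t) i t]
    exact (s.π.app i).2.2 t ht⟩⟩
  fac := by
    intro s i
    apply Subtype.ext
    funext t
    show picL F i (limLift F s t) = (s.π.app i).1 t
    exact hmed_compat F s.pt (fun i => s.π.app i) (fun η t => cone_nat F s η t) i t
  uniq := by
    intro s m hm
    apply Subtype.ext
    funext t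
    apply Subtype.ext
    show (m.1 t).1 = hmed F s.pt (fun i => s.π.app i) (fun η t => cone_nat F s η t) t
    refine hmed_unique F s.pt (fun i => s.π.app i) (fun η t => cone_nat F s η t) m.1 m.2.1 ?_ t
    intro i t'
    have := congrArg Subtype.val (hm i)
    exact congrFun this t'

theorem hasLimitF : Limits.HasLimit F :=
  Limits.HasLimit.mk ⟨limCone F, limIsLimit F⟩

end LimitGlue

end CuP
namespace CuP

open Set CategoryTheory

set_option linter.unusedSectionVars false

section Colimit

variable {I : Type u} [SmallCategory I] (F : I ⥤ CuscCat.{u})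

/-- Way-below paths in the object `F.obj i`. -/
def PathM (i : I) : Type u :=
  {p : D → (F.obj i).carrier // ∀ {w w' : D}, DLt w w' → WayBelow (p w) (p w')}

/-- Formal sums of colored paths. -/
abbrev PC : Type u := Multiset (Σ i : I, PathM F i)

/-- An (unscaled) cocone on `F`. -/
structure UC : Type (u + 1) where
  T : Type u
  [am : AddCommMonoid T]
  [po : PartialOrder T]
  cu : CuAxioms T
  leg : ∀ i, (F.obj i).carrier → T
  legHom : ∀ i, IsCuHom (leg i)
  compat : ∀ {i j : I} (η : i ⟶ j) (x : (F.obj i).carrier), leg j ((F.map η).1 x) = leg i x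

attribute [instance] UC.am UC.po

variable {F}

/-- The value of a colored path under a cocone. -/
noncomputable def pSup (co : UC F) (z : Σ i, PathM F i) : co.T :=
  supT co.cu (fun n => co.leg z.1 (z.2.1 (ones n)))
    (monotone_nat_of_le_succ fun n =>
      ((co.legHom z.1).mono (z.2.2 (dlt_ones_lt (Nat.lt_succ_self n))).le))

theorem pSup_le {co : UC F} {z : Σ i, PathM F i} {b : co.T}
    (h : ∀ n, co.leg z.1 (z.2.1 (ones n)) ≤ b) : pSup co z ≤ b :=
  supT_le co.cu (fun n => co.leg z.1 (z.2.1 (ones n))) _ h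

theorem le_pSup (co : UC F) (z : Σ i, PathM F i) (n : ℕ) :
    co.leg z.1 (z.2.1 (ones n)) ≤ pSup co z :=
  le_supT co.cu (fun n => co.leg z.1 (z.2.1 (ones n))) _ n

/-- The value of a formal sum under a cocone. -/
noncomputable def Hm (co : UC F) (c : PC F) : co.T := (c.map (pSup co)).sum

theorem Hm_add (co : UC F) (c d : PC F) : Hm co (c + d) = Hm co c + Hm co d := by
  show ((c + d).map (pSup co)).sum = _
  rw [Multiset.map_add, Multiset.sum_add]
  rfl

theorem Hm_zero (co : UC F) : Hm co 0 = 0 := rfl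

theorem Hm_singleton (co : UC F) (z : Σ i, PathM F i) : Hm co {z} = pSup co z := by
  show (Multiset.map (pSup co) {z}).sum = _
  rw [Multiset.map_singleton, Multiset.sum_singleton]

/-- Sum-monotonicity. -/
theorem msum_le {T : Type w} [AddCommMonoid T] [PartialOrder T] (pom : PoMAxioms T)
    {α : Type v} (f g : α → T) :
    ∀ s : Multiset α, (∀ x ∈ s, f x ≤ g x) → (s.map f).sum ≤ (s.map g).sum := by
  intro s
  induction s using Multiset.induction_on with
  | empty => intro _; simp
  | cons a s ih =>
    intro h
    rw [Multiset.map_cons, Multiset.map_cons, Multiset.sum_cons, Multiset.sum_cons]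
    exact PoMAxioms.add_le_add pom (h a (Multiset.mem_cons_self a s))
      (ih fun x hx => h x (Multiset.mem_cons_of_mem hx))

/-- Sum of way-belows. -/
theorem msum_wb {T : Type w} [AddCommMonoid T] [PartialOrder T] (cu : CuAxioms T)
    {α : Type v} (f g : α → T) :
    ∀ s : Multiset α, (∀ x ∈ s, WayBelow (f x) (g x)) →
      WayBelow ((s.map f).sum) ((s.map g).sum) := by
  intro s
  induction s using Multiset.induction_on with
  | empty => intro _; simpa using wayBelow_zero cu.toPoMAxioms (0 : T)
  | cons a s ih =>
    intro h
    rw [Multiset.map_cons, Multiset.map_cons, Multiset.sum_cons, Multiset.sum_cons]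
    exact cu.O3 _ _ _ _ (h a (Multiset.mem_cons_self a s))
      (ih fun x hx => h x (Multiset.mem_cons_of_mem hx))

variable (F)

/-- Cutting a colored path below a node `w`. -/
def cutE (w : D) (z : Σ i, PathM F i) : Σ i, PathM F i :=
  ⟨z.1, ⟨fun s => z.2.1 ((w ++ [false]) ++ s), fun h => z.2.2 (dlt_append_left h)⟩⟩

/-- Cutting a formal sum below a node `w`. -/
def cutw (w : D) (c : PC F) : PC F := c.map (cutE F w)

theorem cutw_add (w : D) (c d : PC F) : cutw F w (c + d) = cutw F w c + cutw F w d :=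
  Multiset.map_add _ _ _

theorem cutw_zero (w : D) : cutw F w 0 = 0 := rfl

theorem cutw_singleton (w : D) (z : Σ i, PathM F i) :
    cutw F w {z} = {cutE F w z} := by
  simp [cutw]

/-- The semantic preorder. -/
def SemLe (c d : PC F) : Prop := ∀ co : UC F, Hm co c ≤ Hm co d

theorem SemLe.rfl' (c : PC F) : SemLe F c c := fun _ => le_rfl

theorem SemLe.trans' {c d e : PC F} (h₁ : SemLe F c d) (h₂ : SemLe F d e) : SemLe F c e :=
  fun co => (h₁ co).trans (h₂ co)

theorem SemLe.add' {c d c' d' : PC F} (h₁ : SemLe F c d) (h₂ : SemLe F c' d') :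
    SemLe F (c + c') (d + d') := by
  intro co
  rw [Hm_add, Hm_add]
  exact PoMAxioms.add_le_add co.cu.toPoMAxioms (h₁ co) (h₂ co)

/-- a path value at any node is below `pSup`. -/
theorem val_le_pSup (co : UC F) (z : Σ i, PathM F i) (v : D) :
    co.leg z.1 (z.2.1 v) ≤ pSup co z := by
  have h1 : WayBelow (z.2.1 v) (z.2.1 (ones (v.length + 1))) :=
    z.2.2 (dlt_ones_nil v (Nat.lt_succ_self _))
  exact ((co.legHom z.1).mono h1.le).trans (le_pSup co z (v.length + 1))

/-- Cutting decreases. -/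
theorem semle_cut (w : D) (c : PC F) : SemLe F (cutw F w c) c := by
  intro co
  show ((c.map (cutE F w)).map (pSup co)).sum ≤ (c.map (pSup co)).sum
  rw [Multiset.map_map]
  refine msum_le co.cu.toPoMAxioms _ _ c ?_
  intro z hz
  refine pSup_le ?_
  intro n
  exact val_le_pSup F co z _

/-- Positional comparison of cuts. -/
theorem semle_cut_cut {w w' : D}
    (h : ∀ s : D, ∃ s', DLt ((w ++ [false]) ++ s) ((w' ++ [false]) ++ s')) (c : PC F) :
    SemLe F (cutw F w c) (cutw F w' c) := by
  intro co
  show ((c.map (cutE F w)).map (pSup co)).sum ≤ ((c.map (cutE F w')).map (pSup co)).sum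
  rw [Multiset.map_map, Multiset.map_map]
  refine msum_le co.cu.toPoMAxioms _ _ c ?_
  intro z hz
  refine pSup_le ?_
  intro n
  obtain ⟨s', hs'⟩ := h (ones n)
  have h1 : WayBelow (z.2.1 ((w ++ [false]) ++ ones n)) (z.2.1 ((w' ++ [false]) ++ s')) :=
    z.2.2 hs'
  exact ((co.legHom z.1).mono h1.le).trans (val_le_pSup F co (cutE F w' z) s')

/-- `cut ∘ cut` is a cut. -/
theorem cutw_cutw (v w : D) (c : PC F) :
    cutw F v (cutw F w c) = cutw F ((w ++ [false]) ++ v) c := by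
  show (c.map (cutE F w)).map (cutE F v) = c.map (cutE F ((w ++ [false]) ++ v))
  rw [Multiset.map_map]
  refine Multiset.map_congr rfl ?_
  intro z hz
  apply Sigma.ext
  · rfl
  · apply heq_of_eq
    apply Subtype.ext
    funext s
    show z.2.1 ((w ++ [false]) ++ ((v ++ [false]) ++ s)) = z.2.1 ((((w ++ [false]) ++ v) ++ [false]) ++ s)
    congr 1
    simp [List.append_assoc]

/-- `w ++ 0·s < w ++ 1·r`. -/
theorem dlt_false_true (w s r : D) : DLt (w ++ false :: s) (w ++ true :: r) :=
  dlt_append_left (DLt.ft s r)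

/-- Anything in a `0`-subtree of a short `w` is below any `1^M` subtree. -/
theorem dlt_false_ones {w : D} {M : ℕ} (h : w.length < M) (r z : D) :
    DLt (w ++ false :: r) (ones M ++ z) := by
  induction w generalizing M with
  | nil =>
    cases M with
    | zero => omega
    | succ M => exact DLt.ft _ _
  | cons b w ih =>
    cases M with
    | zero => omega
    | succ M =>
      cases b with
      | false => exact DLt.ft _ _
      | true => exact DLt.cons true (ih (by simpa using h))

/-- cut below `w` is below cut at a long anchor. -/
theorem semle_cut_ones {w : D} {M : ℕ} (h : w.length < M) (c : PC F) :
    SemLe F (cutw F w c) (cutw F (ones M) c) := by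
  refine semle_cut_cut F ?_ c
  intro s
  refine ⟨s, ?_⟩
  have h1 : DLt (w ++ false :: s) (ones M ++ false :: s) := dlt_false_ones h s _
  simpa using h1

/-- The W-structure for the colimit. -/
def Rcol : WS (PC F) where
  rel c d := ∃ w, SemLe F c (cutw F w d)
  trans := by
    rintro a b c ⟨w, hw⟩ ⟨w', hw'⟩
    exact ⟨w', hw.trans' F ((semle_cut F w b).trans' F hw')⟩
  zero := by
    intro x
    refine ⟨[], fun co => ?_⟩
    rw [Hm_zero]
    exact co.cu.zero_le _
  addc := by
    rintro a b c d ⟨w, hw⟩ ⟨w', hw'⟩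
    set M : ℕ := max w.length w'.length + 1 with hM
    refine ⟨ones M, ?_⟩
    rw [cutw_add]
    refine SemLe.add' F (hw.trans' F (semle_cut_ones F ?_ b)) (hw'.trans' F (semle_cut_ones F ?_ d))
    · omega
    · omega
  interp := by
    rintro a b ⟨w, hw⟩
    refine ⟨cutw F (w ++ [true, false]) b, ⟨[], ?_⟩, ⟨w ++ [true], ?_⟩⟩
    · -- a ≤ cut [] (cut (w10) b)
      rw [cutw_cutw]
      refine hw.trans' F (semle_cut_cut F ?_ b)
      intro s
      refine ⟨s, ?_⟩
      have h1 : DLt (w ++ false :: s)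
          (w ++ true :: (([false] ++ [false]) ++ ([] ++ [false]) ++ s)) :=
        dlt_false_true w s _
      have he : ((w ++ [true, false]) ++ [false]) ++ [] ++ [false] ++ s
          = w ++ true :: (([false] ++ [false]) ++ ([] ++ [false]) ++ s) := by
        simp
      -- target form: (((w ++ [true,false]) ++ [false]) ++ []) ++ [false]) ++ s
      have h2 : DLt ((w ++ [false]) ++ s)
          (((((w ++ [true, false]) ++ [false]) ++ []) ++ [false]) ++ s) := by
        have : (w ++ [false]) ++ s = w ++ false :: s := by simp
        rw [this]
        have : ((((w ++ [true, false]) ++ [false]) ++ []) ++ [false]) ++ s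
            = w ++ true :: (false :: false :: false :: s) := by simp
        rw [this]
        exact dlt_false_true w s _
      exact h2
    · -- cut (w10) b ≤ cut (w1) b
      refine semle_cut_cut F ?_ b
      intro s
      refine ⟨[true], ?_⟩
      have : ((w ++ [true, false]) ++ [false]) ++ s = (w ++ [true]) ++ (false :: false :: s) := by
        simp
      rw [this]
      have : ((w ++ [true]) ++ [false]) ++ [true] = (w ++ [true]) ++ (false :: [true]) := by
        simp
      rw [this]
      exact dlt_append_left (DLt.cons false (DLt.ft s []))

/-- The colimit pre-object. -/
def SC : Type u := Cpl (Rcol F)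

instance : AddCommMonoid (SC F) := inferInstanceAs (AddCommMonoid (Cpl (Rcol F)))
instance : PartialOrder (SC F) := inferInstanceAs (PartialOrder (Cpl (Rcol F)))

theorem cuSC : CuAxioms (SC F) := cplCu (Rcol F)

end Colimit

end CuP
namespace CuP

open Set CategoryTheory

set_option linter.unusedSectionVars false

section Colimit2

variable {I : Type u} [SmallCategory I] (F : I ⥤ CuscCat.{u})

/-- The `n`-th colored fill path of an element `x` of `F.obj i`. -/
noncomputable def fpathE (i : I) (x : (F.obj i).carrier) (n : ℕ) : Σ i, PathM F i :=
  ⟨i, ⟨fill (F.obj i).cu (chain_wb (F.obj i).cu x n),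
    fun h => fill_mono (F.obj i).cu h _⟩⟩

theorem fpathE_le (i : I) (x : (F.obj i).carrier) (n : ℕ) (v : D) :
    ((fpathE F i x n).2.1 v) ≤ chainOf (F.obj i).cu x (n + 1) :=
  (fill_lt (F.obj i).cu _ v).le

theorem fpathE_ge (i : I) (x : (F.obj i).carrier) (n : ℕ) (v : D) :
    chainOf (F.obj i).cu x n ≤ ((fpathE F i x n).2.1 v) :=
  (fill_gt (F.obj i).cu _ v).le

/-- Producing a `rel` between singletons out of leg-inequalities. -/
theorem rel_single_of {i i' : I} (p : PathM F i) (q : PathM F i')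
    (a : (F.obj i).carrier) (b : (F.obj i').carrier)
    (hp : ∀ v, p.1 v ≤ a) (hb : b ≤ q.1 (([] ++ [false]) ++ []))
    (hleg : ∀ co : UC F, co.leg i a ≤ co.leg i' b) :
    (Rcol F).rel {(⟨i, p⟩ : Σ i, PathM F i)} {(⟨i', q⟩ : Σ i, PathM F i)} := by
  refine ⟨[], fun co => ?_⟩
  rw [Hm_singleton, cutw_singleton, Hm_singleton]
  refine pSup_le ?_
  intro n
  refine ((co.legHom i).mono (hp (ones n))).trans ((hleg co).trans ?_)
  refine ((co.legHom i').mono hb).trans ?_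
  exact val_le_pSup F co (cutE F [] ⟨i', q⟩) []

theorem rel_single_pair {i i₁ i₂ : I} (p : PathM F i) (q₁ : PathM F i₁) (q₂ : PathM F i₂)
    (a : (F.obj i).carrier) (b₁ : (F.obj i₁).carrier) (b₂ : (F.obj i₂).carrier)
    (hp : ∀ v, p.1 v ≤ a) (hb₁ : b₁ ≤ q₁.1 (([] ++ [false]) ++ []))
    (hb₂ : b₂ ≤ q₂.1 (([] ++ [false]) ++ []))
    (hleg : ∀ co : UC F, co.leg i a ≤ co.leg i₁ b₁ + co.leg i₂ b₂) :
    (Rcol F).rel {(⟨i, p⟩ : Σ i, PathM F i)}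
      ({(⟨i₁, q₁⟩ : Σ i, PathM F i)} + {(⟨i₂, q₂⟩ : Σ i, PathM F i)}) := by
  refine ⟨[], fun co => ?_⟩
  rw [Hm_singleton, cutw_add, Hm_add, cutw_singleton, cutw_singleton,
    Hm_singleton, Hm_singleton]
  refine pSup_le ?_
  intro n
  refine ((co.legHom i).mono (hp (ones n))).trans ((hleg co).trans ?_)
  refine PoMAxioms.add_le_add co.cu.toPoMAxioms ?_ ?_
  · exact ((co.legHom i₁).mono hb₁).trans (val_le_pSup F co (cutE F [] ⟨i₁, q₁⟩) [])
  · exact ((co.legHom i₂).mono hb₂).trans (val_le_pSup F co (cutE F [] ⟨i₂, q₂⟩) [])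

theorem rel_pair_single {i i₁ i₂ : I} (p₁ : PathM F i₁) (p₂ : PathM F i₂) (q : PathM F i)
    (a₁ : (F.obj i₁).carrier) (a₂ : (F.obj i₂).carrier) (b : (F.obj i).carrier)
    (hp₁ : ∀ v, p₁.1 v ≤ a₁) (hp₂ : ∀ v, p₂.1 v ≤ a₂)
    (hb : b ≤ q.1 (([] ++ [false]) ++ []))
    (hleg : ∀ co : UC F, co.leg i₁ a₁ + co.leg i₂ a₂ ≤ co.leg i b) :
    (Rcol F).rel ({(⟨i₁, p₁⟩ : Σ i, PathM F i)} + {(⟨i₂, p₂⟩ : Σ i, PathM F i)})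
      {(⟨i, q⟩ : Σ i, PathM F i)} := by
  refine ⟨[], fun co => ?_⟩
  rw [Hm_add, Hm_singleton, Hm_singleton, cutw_singleton, Hm_singleton]
  have h1 : pSup co ⟨i₁, p₁⟩ ≤ co.leg i₁ a₁ :=
    pSup_le (fun n => (co.legHom i₁).mono (hp₁ (ones n)))
  have h2 : pSup co ⟨i₂, p₂⟩ ≤ co.leg i₂ a₂ :=
    pSup_le (fun n => (co.legHom i₂).mono (hp₂ (ones n)))
  refine (PoMAxioms.add_le_add co.cu.toPoMAxioms h1 h2).trans ((hleg co).trans ?_)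
  exact ((co.legHom i).mono hb).trans (val_le_pSup F co (cutE F [] ⟨i, q⟩) [])

/-- The defining sequence of `κ`. -/
noncomputable def kseq (i : I) (x : (F.obj i).carrier) : CSeq (Rcol F) :=
  ⟨fun n => {fpathE F i x n}, by
    intro n
    refine rel_single_of F _ _ (chainOf (F.obj i).cu x (n+1)) (chainOf (F.obj i).cu x (n+1))
      (fpathE_le F i x n) (fpathE_ge F i x (n+1) _) (fun co => le_rfl)⟩

/-- The cocone leg into the colimit. -/
noncomputable def kap (i : I) (x : (F.obj i).carrier) : SC F := mkc (Rcol F) (kseq F i x)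

theorem rel_kseq_of_le {i i' : I} {x : (F.obj i).carrier} {y : (F.obj i').carrier} {n m : ℕ}
    (hleg : ∀ co : UC F, co.leg i (chainOf (F.obj i).cu x (n+1))
      ≤ co.leg i' (chainOf (F.obj i').cu y m)) :
    (Rcol F).rel ((kseq F i x).1 n) ((kseq F i' y).1 m) :=
  rel_single_of F _ _ (chainOf (F.obj i).cu x (n+1)) (chainOf (F.obj i').cu y m)
    (fpathE_le F i x n) (fpathE_ge F i' y m _) hleg

theorem kap_mono (i : I) {x y : (F.obj i).carrier} (h : x ≤ y) : kap F i x ≤ kap F i y := by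
  intro n
  obtain ⟨m, hm⟩ := chain_le_chain (F.obj i).cu h (n + 1)
  exact ⟨m, rel_kseq_of_le F (fun co => (co.legHom i).mono hm)⟩

theorem kap_zero (i : I) : kap F i 0 = 0 := by
  apply le_antisymm
  · erw [mkc_zero]
    intro n
    refine ⟨0, ⟨[], fun co => ?_⟩⟩
    show Hm co {fpathE F i 0 n} ≤ Hm co (cutw F [] ((czero (Rcol F)).1 0))
    rw [Hm_singleton]
    have h0 : ∀ v, (fpathE F i 0 n).2.1 v = 0 := by
      intro v
      refine le_antisymm ?_ ((F.obj i).cu.zero_le _)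
      exact (fpathE_le F i 0 n v).trans (chain_le (F.obj i).cu 0 (n+1))
    refine le_trans (pSup_le ?_) (co.cu.zero_le _)
    intro m
    rw [h0 (ones m)]
    exact le_of_eq ((co.legHom _).map_zero)
  · exact cpl_zero_le (Rcol F) _

theorem kap_add (i : I) (x y : (F.obj i).carrier) :
    kap F i (x + y) = kap F i x + kap F i y := by
  have hchainsum : IsLUB (Set.range fun m =>
      chainOf (F.obj i).cu x m + chainOf (F.obj i).cu y m) (x + y) :=
    (F.obj i).cu.O4 _ _ (chain_mono _ x) (chain_mono _ y) _ _
      (chain_isLUB _ x) (chain_isLUB _ y)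
  apply le_antisymm
  · erw [kap, kap, kap, mkc_add]
    intro n
    have h1 : WayBelow (chainOf (F.obj i).cu (x+y) (n+1)) (x + y) := chain_wb_top _ _ _
    obtain ⟨m, hm⟩ := h1 _ (fun a b hab =>
      PoMAxioms.add_le_add (F.obj i).cu.toPoMAxioms (chain_mono _ x hab) (chain_mono _ y hab))
      _ hchainsum le_rfl
    refine ⟨m, ?_⟩
    refine rel_single_pair F _ _ _ (chainOf (F.obj i).cu (x+y) (n+1))
      (chainOf (F.obj i).cu x m) (chainOf (F.obj i).cu y m)
      (fpathE_le F i (x+y) n) (fpathE_ge F i x m _) (fpathE_ge F i y m _) ?_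
    intro co
    refine ((co.legHom i).mono hm).trans ?_
    rw [(co.legHom i).map_add]
  · erw [kap, kap, kap, mkc_add]
    intro n
    have h1 : WayBelow (chainOf (F.obj i).cu x (n+1) + chainOf (F.obj i).cu y (n+1)) (x + y) :=
      (F.obj i).cu.O3 _ _ _ _ (chain_wb_top _ x (n+1)) (chain_wb_top _ y (n+1))
    obtain ⟨m, hm⟩ := h1 _ (chain_mono _ (x+y)) _ (chain_isLUB _ (x+y)) le_rfl
    refine ⟨m, ?_⟩
    refine rel_pair_single F _ _ _ (chainOf (F.obj i).cu x (n+1)) (chainOf (F.obj i).cu y (n+1))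
      (chainOf (F.obj i).cu (x+y) m)
      (fpathE_le F i x n) (fpathE_le F i y n) (fpathE_ge F i (x+y) m _) ?_
    intro co
    rw [← (co.legHom i).map_add]
    exact (co.legHom i).mono hm

theorem kap_wayBelow (i : I) {x y : (F.obj i).carrier} (h : WayBelow x y) :
    WayBelow (kap F i x) (kap F i y) := by
  obtain ⟨m, hm⟩ := h (chainOf (F.obj i).cu y) (chain_mono _ y) y (chain_isLUB _ y) le_rfl
  refine wb_intro (Rcol F) m ?_
  intro n
  refine rel_kseq_of_le F ?_
  intro co
  exact (co.legHom i).mono ((chain_le _ x (n+1)).trans hm)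

theorem kap_seqSup (i : I) (s : ℕ → (F.obj i).carrier) (hs : Monotone s)
    (x : (F.obj i).carrier) (hx : IsLUB (Set.range s) x) :
    IsLUB (Set.range fun k => kap F i (s k)) (kap F i x) := by
  rw [isLUB_range_iff]
  constructor
  · intro k
    exact kap_mono F i (hx.1 ⟨k, rfl⟩)
  · intro c hc
    rw [← mkc_out (Rcol F) c]
    intro n
    obtain ⟨k, hk⟩ := (chain_wb_top (F.obj i).cu x (n+2)) s hs x hx le_rfl
    have h1 : WayBelow (chainOf (F.obj i).cu x (n+1)) (s k) :=
      (chain_wb (F.obj i).cu x (n+1)).mono le_rfl hk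
    obtain ⟨m, hm⟩ := h1 (chainOf (F.obj i).cu (s k)) (chain_mono _ _) _ (chain_isLUB _ _) le_rfl
    have hrel : (Rcol F).rel ((kseq F i x).1 n) ((kseq F i (s k)).1 m) :=
      rel_kseq_of_le F (fun co => (co.legHom i).mono hm)
    have h2 : kap F i (s k) ≤ mkc (Rcol F) (Quotient.out c) := by
      erw [mkc_out]; exact hc k
    obtain ⟨j, hj⟩ := h2 m
    exact ⟨j, (Rcol F).trans hrel hj⟩

theorem kap_natural {i j : I} (η : i ⟶ j) (x : (F.obj i).carrier) :
    kap F j ((F.map η).1 x) = kap F i x := by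
  apply le_antisymm
  · intro n
    -- chain of (Fη x) at (n+1) is below Fη (chain x m) for some m
    have hlub : IsLUB (Set.range fun m => (F.map η).1 (chainOf (F.obj i).cu x m))
        ((F.map η).1 x) :=
      (F.map η).2.1.map_seqSup _ (chain_mono _ x) x (chain_isLUB _ x)
    have h1 : WayBelow (chainOf (F.obj j).cu ((F.map η).1 x) (n+1)) ((F.map η).1 x) :=
      chain_wb_top _ _ _
    obtain ⟨m, hm⟩ := h1 _ (fun a b hab => (F.map η).2.1.mono (chain_mono _ x hab)) _ hlub le_rfl
    refine ⟨m, ?_⟩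
    refine rel_kseq_of_le F ?_
    intro co
    refine ((co.legHom j).mono hm).trans ?_
    rw [co.compat η]
  · intro n
    have h1 : WayBelow ((F.map η).1 (chainOf (F.obj i).cu x (n+1)))
        ((F.map η).1 x) :=
      (F.map η).2.1.map_wayBelow _ _ (chain_wb_top _ x (n+1))
    obtain ⟨m, hm⟩ := h1 _ (chain_mono _ _) _ (chain_isLUB _ ((F.map η).1 x)) le_rfl
    refine ⟨m, ?_⟩
    refine rel_kseq_of_le F ?_
    intro co
    rw [← co.compat η]
    exact (co.legHom j).mono hm

theorem kap_isCuHom (i : I) : IsCuHom (kap F i) :=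
  ⟨⟨kap_zero F i, kap_add F i, fun _ _ h => kap_mono F i h⟩,
   fun _ _ h => kap_wayBelow F i h, fun s hs a ha => kap_seqSup F i s hs a ha⟩

end Colimit2

end CuP
namespace CuP

open Set CategoryTheory

set_option linter.unusedSectionVars false

section Colimit3

variable {I : Type u} [SmallCategory I] (F : I ⥤ CuscCat.{u})

/-- upgrade a `SemLe` into a cut into `rel`. -/
theorem rel_of_semle_cut {c d : PC F} {w₀ : D} (h : SemLe F c (cutw F w₀ d)) :
    (Rcol F).rel c (cutw F (ones (w₀.length + 1)) d) := by
  refine ⟨[], ?_⟩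
  rw [cutw_cutw]
  refine h.trans' F (semle_cut_cut F ?_ d)
  intro s
  refine ⟨s, ?_⟩
  have h1 : DLt (w₀ ++ false :: s)
      (ones (w₀.length + 1) ++ (false :: false :: s)) :=
    dlt_false_ones (Nat.lt_succ_self _) s _
  have e1 : (w₀ ++ [false]) ++ s = w₀ ++ false :: s := by simp
  have e2 : ((((ones (w₀.length + 1) ++ [false]) ++ []) ++ [false]) ++ s)
      = ones (w₀.length + 1) ++ (false :: false :: s) := by simp
  rw [e1, e2]
  exact h1

/-- The cut-approximation sequence of a formal sum. -/
noncomputable def rhoC (c : PC F) : CSeq (Rcol F) :=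
  ⟨fun m => cutw F (ones m) c, by
    intro m
    have h : SemLe F (cutw F (ones m) c) (cutw F (ones m) c) := SemLe.rfl' F _
    have := rel_of_semle_cut F h
    -- rel (cutw 1^m c) (cutw 1^(m+1)-ish c): adjust index
    have hlen : (ones m).length + 1 = m + 1 := by simp [ones]
    rw [hlen] at this
    exact this⟩

theorem rho_le (σ : CSeq (Rcol F)) (n : ℕ) :
    mkc (Rcol F) (rhoC F (σ.1 n)) ≤ mkc (Rcol F) σ := by
  intro m
  obtain ⟨w₀, h₀⟩ := σ.2 n
  exact ⟨n + 1, ⟨w₀, ((semle_cut F (ones m) (σ.1 n)).trans' F h₀)⟩⟩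

theorem rho_mono (σ : CSeq (Rcol F)) : Monotone (fun n => mkc (Rcol F) (rhoC F (σ.1 n))) := by
  refine monotone_nat_of_le_succ ?_
  intro n m
  obtain ⟨w₀, h₀⟩ := σ.2 n
  have h1 : SemLe F (cutw F (ones m) (σ.1 n)) (cutw F w₀ (σ.1 (n+1))) :=
    (semle_cut F (ones m) (σ.1 n)).trans' F h₀
  exact ⟨w₀.length + 1, rel_of_semle_cut F h1⟩

theorem rho_isLUB (σ : CSeq (Rcol F)) :
    IsLUB (Set.range fun n => mkc (Rcol F) (rhoC F (σ.1 n))) (mkc (Rcol F) σ) := by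
  rw [isLUB_range_iff]
  refine ⟨fun n => rho_le F σ n, ?_⟩
  intro u hu
  rw [← mkc_out (Rcol F) u]
  intro n
  obtain ⟨w₀, h₀⟩ := σ.2 n
  have h1 : (Rcol F).rel (σ.1 n) ((rhoC F (σ.1 (n+1))).1 (w₀.length + 1)) :=
    rel_of_semle_cut F h₀
  have h2 : mkc (Rcol F) (rhoC F (σ.1 (n+1))) ≤ mkc (Rcol F) (Quotient.out u) := by
    rw [mkc_out]; exact hu (n + 1)
  obtain ⟨j, hj⟩ := h2 (w₀.length + 1)
  exact ⟨j, (Rcol F).trans h1 hj⟩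

theorem rhoC_add_mkc (c d : PC F) :
    mkc (Rcol F) (rhoC F (c + d)) = mkc (Rcol F) (rhoC F c) + mkc (Rcol F) (rhoC F d) := by
  rw [mkc_add]
  apply congrArg (mkc (Rcol F))
  apply Subtype.ext
  funext m
  exact cutw_add F (ones m) c d

theorem rhoC_zero_mkc : mkc (Rcol F) (rhoC F 0) = 0 := by
  rw [mkc_zero]
  apply congrArg (mkc (Rcol F))
  apply Subtype.ext
  funext m
  rfl

/-- The value of a colored path. -/
noncomputable def psupE (i : I) (p : PathM F i) : (F.obj i).carrier :=
  supT (F.obj i).cu (fun n => p.1 (ones n))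
    (monotone_nat_of_le_succ fun n => (p.2 (dlt_ones_lt (Nat.lt_succ_self n))).le)

theorem le_psupE (i : I) (p : PathM F i) (n : ℕ) : p.1 (ones n) ≤ psupE F i p :=
  le_supT (F.obj i).cu (fun n => p.1 (ones n)) _ n

/-- The key generation lemma: cut-sequences of singletons are `κ`-images. -/
theorem rho_singleton (i : I) (p : PathM F i) :
    mkc (Rcol F) (rhoC F {(⟨i, p⟩ : Σ i, PathM F i)}) = kap F i (psupE F i p) := by
  set X := psupE F i p with hX
  apply le_antisymm
  · intro m
    -- p (1^m) ≪ p (1^(m+1)) ≤ X, so p (1^m) ≤ chain X k for some k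
    have h1 : WayBelow (p.1 (ones m)) X :=
      (p.2 (dlt_ones_lt (Nat.lt_succ_self m))).mono le_rfl (le_psupE F i p (m+1))
    obtain ⟨k, hk⟩ := h1 (chainOf (F.obj i).cu X) (chain_mono _ X) X (chain_isLUB _ X) le_rfl
    refine ⟨k, ?_⟩
    show (Rcol F).rel (cutw F (ones m) {(⟨i, p⟩ : Σ i, PathM F i)}) ((kseq F i X).1 k)
    rw [cutw_singleton]
    refine rel_single_of F _ _ (p.1 (ones m)) (chainOf (F.obj i).cu X k) ?_
      (fpathE_ge F i X k _) (fun co => (co.legHom i).mono hk)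
    intro v
    have h2 : DLt ((ones m ++ [false]) ++ v) (ones m) := by
      have : (ones m ++ [false]) ++ v = ones m ++ false :: v := by simp
      rw [this]
      exact dlt_left _ _
    exact (p.2 h2).le
  · intro n
    have h1 : WayBelow (chainOf (F.obj i).cu X (n+1)) X := chain_wb_top _ X (n+1)
    obtain ⟨j, hj⟩ := h1 (fun n => p.1 (ones n))
      (monotone_nat_of_le_succ fun n => (p.2 (dlt_ones_lt (Nat.lt_succ_self n))).le) X
      (supT_isLUB _ _ _) le_rfl
    refine ⟨j + 1, ?_⟩
    show (Rcol F).rel ((kseq F i X).1 n) (cutw F (ones (j+1)) {(⟨i, p⟩ : Σ i, PathM F i)})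
    rw [cutw_singleton]
    refine rel_single_of F _ _ (chainOf (F.obj i).cu X (n+1)) (p.1 (ones j))
      (fpathE_le F i X n) ?_ (fun co => (co.legHom i).mono hj)
    show p.1 (ones j) ≤ p.1 ((ones (j+1) ++ [false]) ++ (([] ++ [false]) ++ []))
    refine (p.2 ?_).le
    have : (ones (j+1) ++ [false]) ++ (([] ++ [false]) ++ []) = ones (j+1) ++ (false :: [false]) := by
      simp
    rw [this]
    exact dlt_ones (ones j) (by simp [ones]) _

/-! #### The mediating morphism -/

section ColMed

variable (T : CuscCat.{u}) (h : ∀ i, F.obj i ⟶ T)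
variable (hnat : ∀ {i j : I} (η : i ⟶ j) (x : (F.obj i).carrier),
  (h j).1 ((F.map η).1 x) = (h i).1 x)

/-- The canonical unscaled cocone. -/
noncomputable def coOf : UC F :=
  { T := T.carrier
    cu := T.cu
    leg := fun i => (h i).1
    legHom := fun i => (h i).2.1
    compat := fun η x => hnat η x }

theorem Hm_cut_wb (co : UC F) (w : D) (d : PC F) :
    WayBelow (Hm co (cutw F w d)) (Hm co d) := by
  show WayBelow ((d.map (cutE F w)).map (pSup co)).sum ((d.map (pSup co)).sum)
  rw [Multiset.map_map]
  refine msum_wb co.cu _ _ d ?_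
  intro z hz
  have h1 : pSup co (cutE F w z) ≤ co.leg z.1 (z.2.1 w) := by
    refine pSup_le ?_
    intro n
    refine (co.legHom z.1).mono ?_
    refine (z.2.2 ?_).le
    have : (w ++ [false]) ++ ones n = w ++ false :: ones n := by simp
    rw [this]
    exact dlt_left _ _
  have h2 : WayBelow (co.leg z.1 (z.2.1 w)) (co.leg z.1 (z.2.1 (w ++ [true]))) := by
    refine (co.legHom z.1).map_wayBelow _ _ (z.2.2 ?_)
    simpa using dlt_right w []
  have h3 : co.leg z.1 (z.2.1 (w ++ [true])) ≤ pSup co z := val_le_pSup F co z _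
  exact h2.mono h1 h3

theorem HmRel {c d : PC F} (hcd : (Rcol F).rel c d) :
    WayBelow (Hm (coOf F T h hnat) c) (Hm (coOf F T h hnat) d) := by
  obtain ⟨w, hw⟩ := hcd
  exact (Hm_cut_wb F _ w d).mono (hw (coOf F T h hnat)) le_rfl

/-- The mediating Cu-morphism out of the colimit. -/
noncomputable def cmed : SC F → T.carrier :=
  ext (Rcol F) T.cu (Hm (coOf F T h hnat)) (fun hr => HmRel F T h hnat hr)

theorem cmed_isCuHom : IsCuHom (cmed F T h hnat) :=
  ext_isCuHom (Rcol F) T.cu _ (Hm_zero _) (Hm_add _) (fun hr => HmRel F T h hnat hr)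

theorem cmed_mk (σ : CSeq (Rcol F)) :
    cmed F T h hnat (mkc (Rcol F) σ)
      = supT T.cu (fun n => Hm (coOf F T h hnat) (σ.1 n))
        (ext_mono_seq (Rcol F) _ (fun hr => HmRel F T h hnat hr) σ) := rfl

theorem cmed_kap (i : I) (x : (F.obj i).carrier) :
    cmed F T h hnat (kap F i x) = (h i).1 x := by
  rw [kap, cmed_mk]
  apply le_antisymm
  · refine supT_le _ _ _ ?_
    intro n
    show Hm (coOf F T h hnat) {fpathE F i x n} ≤ (h i).1 x
    rw [Hm_singleton]
    refine pSup_le ?_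
    intro m
    show (h i).1 ((fpathE F i x n).2.1 (ones m)) ≤ (h i).1 x
    refine (h i).2.1.mono ?_
    exact (fpathE_le F i x n (ones m)).trans (chain_le _ x (n+1))
  · have hlub : IsLUB (Set.range fun m => (h i).1 (chainOf (F.obj i).cu x m)) ((h i).1 x) :=
      (h i).2.1.map_seqSup _ (chain_mono _ x) x (chain_isLUB _ x)
    refine (isLUB_range_iff.1 hlub).2 _ ?_
    intro m
    have h1 : (h i).1 (chainOf (F.obj i).cu x m) ≤ Hm (coOf F T h hnat) ((kseq F i x).1 m) := by
      show _ ≤ Hm (coOf F T h hnat) {fpathE F i x m}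
      rw [Hm_singleton]
      refine le_trans ?_ (le_pSup (coOf F T h hnat) (fpathE F i x m) 0)
      exact (h i).2.1.mono (fpathE_ge F i x m _)
    exact h1.trans (le_supT _ (fun n => Hm (coOf F T h hnat) ((kseq F i x).1 n)) _ m)

theorem cmed_unique (k : SC F → T.carrier) (hk : IsCuHom k)
    (hkc : ∀ (i : I) (x : (F.obj i).carrier), k (kap F i x) = (h i).1 x) (x : SC F) :
    k x = cmed F T h hnat x := by
  -- first: equality on rho-classes
  have key : ∀ c : PC F, k (mkc (Rcol F) (rhoC F c)) = cmed F T h hnat (mkc (Rcol F) (rhoC F c)) := by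
    intro c
    induction c using Multiset.induction_on with
    | empty =>
      erw [rhoC_zero_mkc, hk.map_zero, (cmed_isCuHom F T h hnat).map_zero]
    | cons a s ih =>
      have : (a ::ₘ s : PC F) = {a} + s := by
        rw [Multiset.singleton_add]
      erw [this, rhoC_add_mkc, hk.map_add, (cmed_isCuHom F T h hnat).map_add, ih]
      congr 1
      obtain ⟨i, p⟩ := a
      rw [rho_singleton, hkc, cmed_kap]
  -- now: every element is the sup of rho-classes
  obtain ⟨σ, rfl⟩ := Quotient.exists_rep x
  rw [show (Quotient.mk (cev (Rcol F)) σ : SC F) = mkc (Rcol F) σ from rfl]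
  have hmono := rho_mono F σ
  have hlub := rho_isLUB F σ
  have hk1 : IsLUB (Set.range fun n => k (mkc (Rcol F) (rhoC F (σ.1 n))))
      (k (mkc (Rcol F) σ)) := hk.map_seqSup _ hmono _ hlub
  have hk2 : IsLUB (Set.range fun n => cmed F T h hnat (mkc (Rcol F) (rhoC F (σ.1 n))))
      (cmed F T h hnat (mkc (Rcol F) σ)) := (cmed_isCuHom F T h hnat).map_seqSup _ hmono _ hlub
  have : (Set.range fun n => k (mkc (Rcol F) (rhoC F (σ.1 n))))
      = (Set.range fun n => cmed F T h hnat (mkc (Rcol F) (rhoC F (σ.1 n)))) := by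
    apply congrArg
    funext n
    exact key (σ.1 n)
  rw [this] at hk1
  exact hk1.unique hk2

end ColMed

/-! #### The scale of the colimit -/

/-- The scale. -/
inductive InTheta : SC F → Prop
  | base (i : I) (x : (F.obj i).carrier) : x ∈ (F.obj i).scale → InTheta (kap F i x)
  | bound (x y : SC F) : x ≤ y → InTheta y → InTheta x
  | tsup (s : ℕ → SC F) (hs : Monotone s) (h : ∀ n, InTheta (s n)) (a : SC F)
      (ha : IsLUB (Set.range s) a) : InTheta a

theorem inTheta_isScale : IsScale {x : SC F | InTheta F x} := by
  constructor
  · intro x y hxy hy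
    exact InTheta.bound x y hxy hy
  · intro s hs h a ha
    exact InTheta.tsup s hs h a ha
  · intro J hJ hsub
    rw [Set.eq_univ_iff_forall]
    have hkap : ∀ (i : I) (y : (F.obj i).carrier), kap F i y ∈ J := by
      intro i
      have hK : IsCuIdeal {y : (F.obj i).carrier | kap F i y ∈ J} := by
        constructor
        · show kap F i 0 ∈ J
          rw [kap_zero]
          exact hJ.zero_mem
        · intro a b hya hyb
          show kap F i (a + b) ∈ J
          rw [kap_add]
          exact hJ.add_mem _ _ hya hyb
        · intro a b hab hb
          exact hJ.lower _ _ (kap_mono F i hab) hb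
        · intro s hs h a ha
          exact hJ.seqSup_mem _ (fun u v huv => kap_mono F i (hs huv)) h _
            (kap_seqSup F i s hs a ha)
      have := (F.obj i).isScale.generates _ hK (fun y hy => hsub (InTheta.base i y hy))
      intro y
      have : y ∈ ({y : (F.obj i).carrier | kap F i y ∈ J} : Set _) := this ▸ Set.mem_univ y
      exact this
    -- rho-classes are in J
    have hrho : ∀ c : PC F, mkc (Rcol F) (rhoC F c) ∈ J := by
      intro c
      induction c using Multiset.induction_on with
      | empty =>
        rw [rhoC_zero_mkc]
        exact hJ.zero_mem
      | cons a s ih =>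
        have : (a ::ₘ s : PC F) = {a} + s := by rw [Multiset.singleton_add]
        rw [this, rhoC_add_mkc]
        refine hJ.add_mem _ _ ?_ ih
        obtain ⟨i, p⟩ := a
        rw [rho_singleton]
        exact hkap i _
    intro x
    obtain ⟨σ, rfl⟩ := Quotient.exists_rep x
    rw [show (Quotient.mk (cev (Rcol F)) σ : SC F) = mkc (Rcol F) σ from rfl]
    exact hJ.seqSup_mem _ (rho_mono F σ) (fun n => hrho (σ.1 n)) _ (rho_isLUB F σ)

end Colimit3

section ColimitGlue

variable {I : Type u} [SmallCategory I] (F : I ⥤ CuscCat.{u})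

/-- The colimit object. -/
noncomputable def colimPt : CuscCat.{u} :=
  { carrier := SC F
    cu := cuSC F
    scale := {x : SC F | InTheta F x}
    isScale := inTheta_isScale F }

/-- The colimit cocone. -/
noncomputable def colimCocone : Limits.Cocone F where
  pt := colimPt F
  ι :=
    { app := fun i => ⟨kap F i, ⟨kap_isCuHom F i, fun x hx => InTheta.base i x hx⟩⟩
      naturality := by
        intro i j η
        apply Subtype.ext
        funext x
        show kap F j ((F.map η).1 x) = kap F i x
        exact kap_natural F η x }

theorem cocone_nat (s : Limits.Cocone F) {i j : I} (η : i ⟶ j) (x : (F.obj i).carrier) :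
    (s.ι.app j).1 ((F.map η).1 x) = (s.ι.app i).1 x := by
  have h2 : F.map η ≫ s.ι.app j = s.ι.app i := by
    simpa using s.ι.naturality η
  rw [← h2]
  rfl

theorem cmed_inTheta (s : Limits.Cocone F) {x : SC F} (hx : InTheta F x) :
    cmed F s.pt (fun i => s.ι.app i) (fun η x => cocone_nat F s η x) x ∈ s.pt.scale := by
  induction hx with
  | base i y hy =>
    rw [cmed_kap]
    exact (s.ι.app i).2.2 y hy
  | bound a b hab hb ih =>
    exact s.pt.isScale.lower _ _
      ((cmed_isCuHom F s.pt (fun i => s.ι.app i) (fun η x => cocone_nat F s η x)).mono hab) ih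
  | tsup q hq h a ha ih =>
    refine s.pt.isScale.seqSup_mem _ ?_ ih _ ?_
    · intro u v huv
      exact (cmed_isCuHom F s.pt (fun i => s.ι.app i) (fun η x => cocone_nat F s η x)).mono
        (hq huv)
    · exact (cmed_isCuHom F s.pt (fun i => s.ι.app i)
        (fun η x => cocone_nat F s η x)).map_seqSup _ hq _ ha

noncomputable def colimIsColimit : Limits.IsColimit (colimCocone F) where
  desc s := ⟨cmed F s.pt (fun i => s.ι.app i) (fun η x => cocone_nat F s η x),
    ⟨cmed_isCuHom F s.pt (fun i => s.ι.app i) (fun η x => cocone_nat F s η x),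
     fun x hx => cmed_inTheta F s hx⟩⟩
  fac := by
    intro s i
    apply Subtype.ext
    funext x
    show cmed F s.pt (fun i => s.ι.app i) (fun η x => cocone_nat F s η x) (kap F i x)
      = (s.ι.app i).1 x
    exact cmed_kap F s.pt (fun i => s.ι.app i) (fun η x => cocone_nat F s η x) i x
  uniq := by
    intro s m hm
    apply Subtype.ext
    funext x
    refine cmed_unique F s.pt (fun i => s.ι.app i) (fun η x => cocone_nat F s η x)
      m.1 m.2.1 ?_ x
    intro i y
    have := congrArg Subtype.val (hm i)
    exact congrFun this y

theorem hasColimitF : Limits.HasColimit F :=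
  Limits.HasColimit.mk ⟨colimCocone F, colimIsColimit F⟩

end ColimitGlue

end CuP

open CategoryTheory in
/-- **The category of scaled Cu-semigroups is bicomplete.** -/
theorem cusc_bicomplete :
    (∀ (I : Type u) (_ : SmallCategory I) (F : I ⥤ CuscCat.{u}), Limits.HasLimit F) ∧
    (∀ (I : Type u) (_ : SmallCategory I) (F : I ⥤ CuscCat.{u}), Limits.HasColimit F) := by
  constructor
  · intro I instI F
    exact CuP.hasLimitF F
  · intro I instI F
    exact CuP.hasColimitF F
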